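/- arXiv:2509.18074 — 7 statements merged into one kernel-verified Lean document; each statement's English description precedes it below -/
import Mathlib

section
/- Let f be holomorphic on ℂ minus its set of simple poles {ω_n}, with residues {r_n}, and let (R_N) be a strictly increasing sequence of positive reals tending to ∞ with no pole on any circle |ω| = R_N. If M_N := sup_{|ω| = R_N} |f(ω)| tends to 0 as N → ∞, then for every ω that is not a pole, the partial sums ∑_{n : |ω_n| < R_N} r_n/(ω − ω_n) converge to f(ω) as N → ∞; moreover, for every R > 0 this convergence is uniform on the set {ω : |ω| ≤ R, ω not a pole}. -/
open Complex Filter Topology Metric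

/-- The pole set is discrete: near any point `z`, the only possible pole is `z` itself. -/
lemma disc_lemma (ω : ℕ → ℂ) (hfin : ∀ ρ : ℝ, {n : ℕ | ‖ω n‖ < ρ}.Finite) (z : ℂ) :
    ∀ᶠ w in 𝓝 z, w ∈ Set.range ω → w = z := by
  have hVfin : ((ω '' {n | ‖ω n‖ < ‖z‖ + 1}) \ {z}).Finite :=
    Set.Finite.subset (Set.Finite.image ω (hfin _)) Set.diff_subset
  have h1 : ((ω '' {n | ‖ω n‖ < ‖z‖ + 1}) \ {z})ᶜ ∈ 𝓝 z :=
    hVfin.isClosed.isOpen_compl.mem_nhds (by simp)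
  filter_upwards [h1, ball_mem_nhds z one_pos] with w hw1 hw2 hmem
  obtain ⟨n, rfl⟩ := hmem
  by_contra hne
  have hd : dist (ω n) z < 1 := mem_ball.1 hw2
  have ht := dist_triangle (ω n) z 0
  simp only [Complex.dist_eq, sub_zero] at ht hd
  exact hw1 ⟨⟨n, by simp only [Set.mem_setOf_eq]; linarith, rfl⟩, hne⟩

/-- Circle integral of a finite sum is the sum of the circle integrals. -/
lemma circleIntegral_finset_sum {ι : Type*} (s : Finset ι) (f : ι → ℂ → ℂ) (c : ℂ) (Rad : ℝ)
    (h : ∀ i ∈ s, CircleIntegrable (f i) c Rad) :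
    (∮ z in C(c, Rad), ∑ i ∈ s, f i z) = ∑ i ∈ s, ∮ z in C(c, Rad), f i z := by
  simp only [circleIntegral, Finset.smul_sum]
  exact intervalIntegral.integral_finset_sum fun i hi => (h i hi).out

/-- Key quantitative bound coming from the Cauchy integral formula applied to
`f` minus the partial fraction sum over poles inside the circle of radius `Rad`. -/
lemma key_bound (f : ℂ → ℂ) (ω r : ℕ → ℂ) (S : Finset ℕ) (Rad : ℝ) (hRad : 0 < Rad)
    (hS : ∀ n, n ∈ S ↔ ‖ω n‖ < Rad)
    (hω_inj : Function.Injective ω)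
    (hdisc : ∀ z : ℂ, ∀ᶠ w in 𝓝 z, w ∈ Set.range ω → w = z)
    (hdiff : ∀ z : ℂ, z ∉ Set.range ω → DifferentiableAt ℂ f z)
    (hres : ∀ n, Tendsto (fun z => (z - ω n) * f z) (𝓝[≠] ω n) (𝓝 (r n)))
    (havoid : ∀ n, ‖ω n‖ ≠ Rad)
    (M : ℝ) (hMub : ∀ ζ ∈ sphere (0:ℂ) Rad, ‖f ζ‖ ≤ M)
    (z : ℂ) (hz : ‖z‖ < Rad) (hznp : z ∉ Set.range ω) :
    ‖f z - ∑ n ∈ S, r n / (z - ω n)‖ ≤ Rad * M / (Rad - ‖z‖) := by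
  set g : ℂ → ℂ := fun w => f w - ∑ n ∈ S, r n / (w - ω n) with hg_def
  have hnp_sphere : ∀ ζ ∈ sphere (0:ℂ) Rad, ζ ∉ Set.range ω := by
    rintro ζ hζ ⟨n, rfl⟩
    exact havoid n (by simpa using mem_sphere_zero_iff_norm.1 hζ)
  have hsphere_ne_z : ∀ ζ ∈ sphere (0:ℂ) Rad, ζ ≠ z := by
    intro ζ hζ h
    rw [mem_sphere_zero_iff_norm, h] at hζ
    exact absurd hζ (ne_of_lt hz)
  have hg_diff : ∀ w : ℂ, w ∉ Set.range ω → DifferentiableAt ℂ g w := by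
    intro w hw
    refine (hdiff w hw).sub (DifferentiableAt.fun_sum fun n hn => ?_)
    have hne : w - ω n ≠ 0 := sub_ne_zero.2 fun h => hw ⟨n, h.symm⟩
    exact (differentiableAt_const _).div (differentiableAt_id.sub (differentiableAt_const _)) hne
  set G : ℂ → ℂ := fun w => limUnder (𝓝[≠] w) g with hG_def
  have hGg : ∀ w : ℂ, w ∉ Set.range ω → G w = g w := fun w hw =>
    Filter.Tendsto.limUnder_eq
      ((hg_diff w hw).continuousAt.tendsto.mono_left nhdsWithin_le_nhds)
  have hG_ev : ∀ w : ℂ, w ∉ Set.range ω → G =ᶠ[𝓝 w] g := by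
    intro w hw
    filter_upwards [hdisc w] with w' hw'
    refine hGg w' fun hmem => hw ?_
    rwa [hw' hmem] at hmem
  have hG_diffAt : ∀ w : ℂ, ‖w‖ ≤ Rad → DifferentiableAt ℂ G w := by
    intro w hw
    by_cases hwp : w ∈ Set.range ω
    · obtain ⟨m, rfl⟩ := hwp
      have hmS : m ∈ S := (hS m).2 (lt_of_le_of_ne hw (havoid m))
      have ht : {w' : ℂ | w' ∈ Set.range ω → w' = ω m} ∈ 𝓝 (ω m) := hdisc (ω m)
      have hd : DifferentiableOn ℂ g ({w' : ℂ | w' ∈ Set.range ω → w' = ω m} \ {ω m}) := by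
        rintro w' ⟨hw1, hw2⟩
        exact (hg_diff w' fun hmem => hw2 (hw1 hmem)).differentiableWithinAt
      have hsum : Tendsto (fun w' => ∑ n ∈ S, (w' - ω m) * (r n / (w' - ω n)))
          (𝓝[≠] ω m) (𝓝 (r m)) := by
        have hsplit : ∀ᶠ w' in 𝓝[≠] ω m, r m + ∑ n ∈ S.erase m, (w' - ω m) * (r n / (w' - ω n))
            = ∑ n ∈ S, (w' - ω m) * (r n / (w' - ω n)) := by
          filter_upwards [self_mem_nhdsWithin] with w' hw'
          have hne : w' - ω m ≠ 0 := sub_ne_zero.2 hw'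
          rw [← Finset.add_sum_erase _ _ hmS]
          congr 1
          field_simp
        have herase : Tendsto (fun w' => ∑ n ∈ S.erase m, (w' - ω m) * (r n / (w' - ω n)))
            (𝓝 (ω m)) (𝓝 0) := by
          have h0 : (∑ n ∈ S.erase m, (ω m - ω m) * (r n / (ω m - ω n))) = 0 := by
            simp
          rw [← h0]
          apply tendsto_finset_sum
          intro n hn
          have hne : ω m - ω n ≠ 0 :=
            sub_ne_zero.2 fun h => Finset.ne_of_mem_erase hn (hω_inj h.symm)
          exact (((continuous_id.sub continuous_const).continuousAt).mul
            ((continuousAt_const.div ((continuous_id.sub continuous_const).continuousAt) hne)))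
        have : Tendsto (fun w' => r m + ∑ n ∈ S.erase m, (w' - ω m) * (r n / (w' - ω n)))
            (𝓝[≠] ω m) (𝓝 (r m + 0)) :=
          tendsto_const_nhds.add (herase.mono_left nhdsWithin_le_nhds)
        rw [add_zero] at this
        exact this.congr' hsplit
      have h1 : Tendsto (fun w' => (w' - ω m) * g w') (𝓝[≠] ω m) (𝓝 0) := by
        have := (hres m).sub hsum
        rw [sub_self] at this
        refine this.congr fun w' => ?_
        simp only [hg_def, mul_sub, Finset.mul_sum]
      have h2 : Tendsto (fun w' => (w' - ω m) * g (ω m)) (𝓝[≠] ω m) (𝓝 0) := by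
        have : Tendsto (fun w' : ℂ => (w' - ω m) * g (ω m)) (𝓝 (ω m))
            (𝓝 ((ω m - ω m) * g (ω m))) :=
          ((continuous_id.sub continuous_const).continuousAt).mul continuousAt_const
        simpa using this.mono_left nhdsWithin_le_nhds
      have htendsto : Tendsto (fun w' => (g w' - g (ω m)) * (w' - ω m)) (𝓝[≠] ω m) (𝓝 0) := by
        have := h1.sub h2
        rw [sub_zero] at this
        refine this.congr fun w' => ?_
        ring
      have ho : (fun w' => g w' - g (ω m)) =o[𝓝[≠] ω m] fun w' => (w' - ω m)⁻¹ := by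
        rw [Asymptotics.isLittleO_iff_tendsto']
        · refine htendsto.congr fun w' => ?_
          rw [div_eq_mul_inv, inv_inv]
        · filter_upwards [self_mem_nhdsWithin] with w' hw' h
          exact absurd (inv_eq_zero.1 h) (sub_ne_zero.2 hw')
      have hupd := Complex.differentiableOn_update_limUnder_of_isLittleO ht hd ho
      have hev : G =ᶠ[𝓝 (ω m)] Function.update g (ω m) (limUnder (𝓝[≠] ω m) g) := by
        filter_upwards [ht] with w' hw'
        by_cases h : w' = ω m
        · subst h
          rw [Function.update_self, hG_def]
        · rw [Function.update_of_ne h]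
          exact hGg w' fun hmem => h (hw' hmem)
      exact (hupd.differentiableAt ht).congr_of_eventuallyEq hev
    · exact (hg_diff w hwp).congr_of_eventuallyEq (hG_ev w hwp)
  have hcont : ContinuousOn G (closedBall (0:ℂ) Rad) := fun w hw =>
    (hG_diffAt w (by simpa using mem_closedBall_zero_iff.1 hw)
      ).continuousAt.continuousWithinAt
  have hzball : z ∈ ball (0:ℂ) Rad := by
    simpa [mem_ball_zero_iff] using hz
  have hcauchy :=
    Complex.two_pi_I_inv_smul_circleIntegral_sub_inv_smul_of_differentiable_on_off_countable
      Set.countable_empty hzball hcont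
      (fun x hx => hG_diffAt x
        (le_of_lt (by simpa using mem_ball_zero_iff.1 hx.1)))
  -- continuity facts on the sphere
  have hcont_f : ContinuousOn f (sphere (0:ℂ) Rad) := fun ζ hζ =>
    (hdiff ζ (hnp_sphere ζ hζ)).continuousAt.continuousWithinAt
  have hcont_inv : ContinuousOn (fun ζ : ℂ => (ζ - z)⁻¹) (sphere (0:ℂ) Rad) := by
    refine ContinuousOn.inv₀ (by fun_prop) fun ζ hζ => sub_ne_zero.2 (hsphere_ne_z ζ hζ)
  have hcont1 : ContinuousOn (fun ζ => (ζ - z)⁻¹ * f ζ) (sphere (0:ℂ) Rad) :=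
    hcont_inv.mul hcont_f
  have hterm_cont : ∀ n ∈ S,
      ContinuousOn (fun ζ => (ζ - z)⁻¹ * (r n / (ζ - ω n))) (sphere (0:ℂ) Rad) := by
    intro n _
    refine hcont_inv.mul (ContinuousOn.div continuousOn_const (by fun_prop)
      fun ζ hζ => sub_ne_zero.2 fun h => hnp_sphere ζ hζ ⟨n, h.symm⟩)
  have hI1 : CircleIntegrable (fun ζ => (ζ - z)⁻¹ * f ζ) 0 Rad :=
    hcont1.circleIntegrable hRad.le
  have hI2 : CircleIntegrable (fun ζ => ∑ n ∈ S, (ζ - z)⁻¹ * (r n / (ζ - ω n))) 0 Rad := by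
    refine ContinuousOn.circleIntegrable hRad.le ?_
    exact continuousOn_finset_sum S hterm_cont
  have hItermInt : ∀ n ∈ S, CircleIntegrable (fun ζ => (ζ - z)⁻¹ * (r n / (ζ - ω n))) 0 Rad :=
    fun n hn => (hterm_cont n hn).circleIntegrable hRad.le
  -- each pole term integrates to zero
  have hterm : ∀ n ∈ S, (∮ ζ in C(0, Rad), (ζ - z)⁻¹ * (r n / (ζ - ω n))) = 0 := by
    intro n hn
    have hωball : ω n ∈ ball (0:ℂ) Rad := by
      simpa [mem_ball_zero_iff] using (hS n).1 hn
    have hzn : z - ω n ≠ 0 := sub_ne_zero.2 fun h => hznp ⟨n, h.symm⟩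
    have hEq : Set.EqOn (fun ζ => (ζ - z)⁻¹ * (r n / (ζ - ω n)))
        (fun ζ => (r n / (z - ω n)) • ((ζ - z)⁻¹ - (ζ - ω n)⁻¹)) (sphere (0:ℂ) Rad) := by
      intro ζ hζ
      have h1 : ζ - z ≠ 0 := sub_ne_zero.2 (hsphere_ne_z ζ hζ)
      have h2 : ζ - ω n ≠ 0 := sub_ne_zero.2 fun h => hnp_sphere ζ hζ ⟨n, h.symm⟩
      simp only [smul_eq_mul]
      field_simp
      ring
    have hIz : CircleIntegrable (fun ζ : ℂ => (ζ - z)⁻¹) 0 Rad := by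
      rw [circleIntegrable_sub_inv_iff]
      right
      rw [abs_of_pos hRad]
      intro h
      exact (hsphere_ne_z z h) rfl
    have hIω : CircleIntegrable (fun ζ : ℂ => (ζ - ω n)⁻¹) 0 Rad := by
      rw [circleIntegrable_sub_inv_iff]
      right
      rw [abs_of_pos hRad]
      intro h
      exact hnp_sphere (ω n) h ⟨n, rfl⟩
    rw [circleIntegral.integral_congr hRad.le hEq, circleIntegral.integral_smul,
      circleIntegral.integral_sub hIz hIω,
      circleIntegral.integral_sub_inv_of_mem_ball hzball,
      circleIntegral.integral_sub_inv_of_mem_ball hωball, sub_self, smul_zero]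
  -- the Cauchy formula identity
  have hker : f z - ∑ n ∈ S, r n / (z - ω n)
      = (2 * Real.pi * I : ℂ)⁻¹ • ∮ ζ in C(0, Rad), (ζ - z)⁻¹ * f ζ := by
    have hGz : G z = g z := hGg z hznp
    have e1 : (∮ ζ in C(0, Rad), (ζ - z)⁻¹ • G ζ) = ∮ ζ in C(0, Rad), (ζ - z)⁻¹ • g ζ :=
      circleIntegral.integral_congr hRad.le fun ζ hζ => by rw [hGg ζ (hnp_sphere ζ hζ)]
    have e2 : (fun ζ => (ζ - z)⁻¹ • g ζ)
        = fun ζ => (ζ - z)⁻¹ * f ζ - ∑ n ∈ S, (ζ - z)⁻¹ * (r n / (ζ - ω n)) := by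
      funext ζ
      simp only [hg_def, smul_eq_mul, mul_sub, Finset.mul_sum]
    have e3 : (∮ ζ in C(0, Rad), (ζ - z)⁻¹ • g ζ)
        = ∮ ζ in C(0, Rad), (ζ - z)⁻¹ * f ζ := by
      rw [e2, circleIntegral.integral_sub hI1 hI2,
        circleIntegral_finset_sum S _ 0 Rad hItermInt, Finset.sum_congr rfl hterm,
        Finset.sum_const_zero, sub_zero]
    calc f z - ∑ n ∈ S, r n / (z - ω n) = g z := rfl
      _ = G z := hGz.symm
      _ = (2 * Real.pi * I : ℂ)⁻¹ • ∮ ζ in C(0, Rad), (ζ - z)⁻¹ • G ζ := hcauchy.symm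
      _ = (2 * Real.pi * I : ℂ)⁻¹ • ∮ ζ in C(0, Rad), (ζ - z)⁻¹ * f ζ := by rw [e1, e3]
  -- norm estimate
  have hRz : 0 < Rad - ‖z‖ := sub_pos.2 hz
  have hMnn : 0 ≤ M := by
    have hsne : (sphere (0:ℂ) Rad).Nonempty := NormedSpace.sphere_nonempty.mpr hRad.le
    obtain ⟨pt, hpt⟩ := hsne
    exact le_trans (norm_nonneg _) (hMub pt hpt)
  have hnormb : ∀ ζ ∈ sphere (0:ℂ) Rad, ‖(ζ - z)⁻¹ * f ζ‖ ≤ M / (Rad - ‖z‖) := by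
    intro ζ hζ
    have hζn : ‖ζ‖ = Rad := mem_sphere_zero_iff_norm.1 hζ
    have h1 : Rad - ‖z‖ ≤ ‖ζ - z‖ := by
      have := norm_sub_norm_le ζ z
      rw [hζn] at this
      simpa using this
    have hfb : ‖f ζ‖ ≤ M := by
      exact hMub ζ hζ
    rw [norm_mul, norm_inv]
    calc ‖ζ - z‖⁻¹ * ‖f ζ‖ ≤ (Rad - ‖z‖)⁻¹ * M := by
          gcongr
      _ = M / (Rad - ‖z‖) := by rw [inv_mul_eq_div]
    -- fallback handled below if needed
  have hbound := circleIntegral.norm_integral_le_of_norm_le_const hRad.le hnormb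
  have h2pi : ‖(2 * Real.pi * I : ℂ)⁻¹‖ = (2 * Real.pi)⁻¹ := by
    rw [norm_inv]
    simp [Complex.norm_real, abs_of_pos Real.pi_pos]
  rw [hker, norm_smul, h2pi]
  have hπ : 0 < Real.pi := Real.pi_pos
  calc (2 * Real.pi)⁻¹ * ‖∮ ζ in C(0, Rad), (ζ - z)⁻¹ * f ζ‖
      ≤ (2 * Real.pi)⁻¹ * (2 * Real.pi * Rad * (M / (Rad - ‖z‖))) := by
        gcongr
    _ = Rad * M / (Rad - ‖z‖) := by
        field_simp

/-- Partial fractions decomposition of a meromorphic function whose maximum modulus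
on a sequence of expanding circles tends to zero. -/
theorem stmt_0
    (f : ℂ → ℂ) (ω r : ℕ → ℂ) (R : ℕ → ℝ)
    (hω_inj : Function.Injective ω)
    (hfin : ∀ ρ : ℝ, {n : ℕ | ‖ω n‖ < ρ}.Finite)
    (hdiff : ∀ z : ℂ, z ∉ Set.range ω → DifferentiableAt ℂ f z)
    (hr : ∀ n, r n ≠ 0)
    (hres : ∀ n, Tendsto (fun z => (z - ω n) * f z) (𝓝[≠] ω n) (𝓝 (r n)))
    (hRpos : ∀ N, 0 < R N)
    (hRmono : StrictMono R)
    (hRtop : Tendsto R atTop atTop)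
    (hRavoid : ∀ n N, ‖ω n‖ ≠ R N)
    (hM : Tendsto (fun N => sSup ((fun z => ‖f z‖) '' sphere (0 : ℂ) (R N)))
      atTop (𝓝 0)) :
    (∀ z : ℂ, z ∉ Set.range ω →
      Tendsto (fun N => ∑ n ∈ (hfin (R N)).toFinset, r n / (z - ω n)) atTop (𝓝 (f z))) ∧
    ∀ ρ : ℝ, 0 < ρ →
      TendstoUniformlyOn (fun N z => ∑ n ∈ (hfin (R N)).toFinset, r n / (z - ω n)) f atTop
        {z : ℂ | ‖z‖ ≤ ρ ∧ z ∉ Set.range ω} := by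
  have hdisc : ∀ z : ℂ, ∀ᶠ w in 𝓝 z, w ∈ Set.range ω → w = z := disc_lemma ω hfin
  set M : ℕ → ℝ := fun N => sSup ((fun z => ‖f z‖) '' sphere (0 : ℂ) (R N))
    with hM_def
  have hnp_sphere : ∀ N, ∀ ζ ∈ sphere (0:ℂ) (R N), ζ ∉ Set.range ω := by
    rintro N ζ hζ ⟨n, rfl⟩
    exact hRavoid n N (by simpa using mem_sphere_zero_iff_norm.1 hζ)
  have hMub : ∀ N, ∀ ζ ∈ sphere (0:ℂ) (R N), ‖f ζ‖ ≤ M N := by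
    intro N ζ hζ
    refine le_csSup ?_ ⟨ζ, hζ, rfl⟩
    refine IsCompact.bddAbove_image (isCompact_sphere 0 (R N)) ?_
    intro x hx
    exact (continuous_norm.continuousAt.comp
      (hdiff x (hnp_sphere N x hx)).continuousAt).continuousWithinAt
  have key : ∀ N, ∀ z : ℂ, ‖z‖ < R N → z ∉ Set.range ω →
      ‖f z - ∑ n ∈ (hfin (R N)).toFinset, r n / (z - ω n)‖
        ≤ R N * M N / (R N - ‖z‖) := fun N z hz hznp =>
    key_bound f ω r (hfin (R N)).toFinset (R N) (hRpos N)
      (fun n => by simp) hω_inj hdisc hdiff hres (fun n => hRavoid n N)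
      (M N) (hMub N) z hz hznp
  have huni : ∀ ρ : ℝ, 0 < ρ →
      TendstoUniformlyOn (fun N z => ∑ n ∈ (hfin (R N)).toFinset, r n / (z - ω n)) f atTop
        {z : ℂ | ‖z‖ ≤ ρ ∧ z ∉ Set.range ω} := by
    intro ρ hρ
    rw [Metric.tendstoUniformlyOn_iff]
    intro ε hε
    have hev1 : ∀ᶠ N in atTop, 2 * ρ ≤ R N := hRtop.eventually_ge_atTop (2 * ρ)
    have hev2 : ∀ᶠ N in atTop, M N < ε / 2 :=
      hM.eventually (tendsto_id.eventually_lt_const (by linarith)) |>.mono fun N h => h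
    filter_upwards [hev1, hev2] with N h1 h2
    rintro z ⟨hzρ, hznp⟩
    have hzR : ‖z‖ < R N := lt_of_le_of_lt hzρ (by linarith)
    have hb := key N z hzR hznp
    have hMnn : 0 ≤ M N := by
      have hsne : (sphere (0:ℂ) (R N)).Nonempty := NormedSpace.sphere_nonempty.mpr (hRpos N).le
      obtain ⟨pt, hpt⟩ := hsne
      exact le_trans (norm_nonneg _) (hMub N pt hpt)
    have habs : 0 ≤ ‖z‖ := norm_nonneg z
    have hquot : R N * M N / (R N - ‖z‖) ≤ 2 * M N := by
      rw [div_le_iff₀ (by linarith)]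
      nlinarith
    rw [dist_eq_norm]
    calc ‖f z - ∑ n ∈ (hfin (R N)).toFinset, r n / (z - ω n)‖
        ≤ R N * M N / (R N - ‖z‖) := hb
      _ ≤ 2 * M N := hquot
      _ < ε := by linarith
  refine ⟨?_, huni⟩
  intro z hz
  have hmem : z ∈ {w : ℂ | ‖w‖ ≤ ‖z‖ + 1 ∧ w ∉ Set.range ω} :=
    ⟨by linarith, hz⟩
  have hpos : (0:ℝ) < ‖z‖ + 1 := by
    have := norm_nonneg z; linarith
  exact (huni (‖z‖ + 1) hpos).tendsto_at hmem
end

section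
/- Let w_m = d·(m + ξ) for m ≥ 1 with d = |d|e^{iθ} a nonzero complex number and ξ ∈ ℂ, each w_m nonzero, and let (δ_m) be complex numbers with |δ_m| ≤ K·m^{−ε} for some constants K > 0 and ε > 0. Fix an angle φ with e^{iφ} ≠ e^{iθ}, and assume r·e^{iφ} ≠ w_m and r·e^{iφ} ≠ w_m + δ_m for all r > 0 and all m. Then r · ∑_{m=1}^{∞} [1/(r e^{iφ} − w_m) − 1/(r e^{iφ} − w_m − δ_m)] tends to 0 as r → ∞ (in particular the series converges for all sufficiently large r). -/
open Complex Filter Topology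

lemma key_sep (u v : ℂ) (hu : ‖u‖ = 1) (hv : ‖v‖ = 1) (huv : u ≠ v) :
    ∃ c : ℝ, 0 < c ∧ ∀ a b : ℝ, 0 ≤ a → 0 ≤ b →
      c * (a + b) ≤ ‖(a : ℂ) * u - (b : ℂ) * v‖ := by
  set t : ℝ := (u * (starRingEnd ℂ) v).re with ht
  have habs : ‖u * (starRingEnd ℂ) v‖ = 1 := by
    simp [map_mul, hu, hv]
  have ht1 : t ≤ 1 := by
    calc t ≤ ‖u * (starRingEnd ℂ) v‖ := Complex.re_le_norm _
    _ = 1 := habs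
  have htlt : t < 1 := by
    rcases lt_or_eq_of_le ht1 with h | h
    · exact h
    · exfalso
      have hz : u * (starRingEnd ℂ) v = 1 := by
        have him : (u * (starRingEnd ℂ) v).im = 0 := by
          have := Complex.sq_norm (u * (starRingEnd ℂ) v)
          rw [habs] at this
          rw [Complex.normSq_apply] at this
          nlinarith [this, h]
        apply Complex.ext
        · rw [Complex.one_re, ← h]
        · simpa using him
      apply huv
      have hvv : (starRingEnd ℂ) v * v = 1 := by
        have := Complex.normSq_eq_norm_sq v
        rw [hv] at this
        rw [mul_comm, Complex.mul_conj, this]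
        norm_num
      calc u = u * ((starRingEnd ℂ) v * v) := by rw [hvv, mul_one]
      _ = (u * (starRingEnd ℂ) v) * v := by ring
      _ = v := by rw [hz, one_mul]
  set s : ℝ := max t 0 with hs
  have hs0 : 0 ≤ s := le_max_right _ _
  have hs1 : s < 1 := max_lt htlt one_pos
  have hst : t ≤ s := le_max_left _ _
  refine ⟨Real.sqrt ((1 - s) / 2), Real.sqrt_pos.2 (by linarith), ?_⟩
  intro a b ha hb
  have hnormSq : Complex.normSq ((a : ℂ) * u - (b : ℂ) * v) = a ^ 2 + b ^ 2 - 2 * (a * b) * t := by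
    rw [Complex.normSq_sub]
    have h1 : Complex.normSq ((a:ℂ) * u) = a ^ 2 := by
      rw [Complex.normSq_mul, Complex.normSq_ofReal, Complex.normSq_eq_norm_sq, hu]
      ring
    have h2 : Complex.normSq ((b:ℂ) * v) = b ^ 2 := by
      rw [Complex.normSq_mul, Complex.normSq_ofReal, Complex.normSq_eq_norm_sq, hv]
      ring
    have h3 : ((a:ℂ) * u * (starRingEnd ℂ) ((b:ℂ) * v)).re = (a * b) * t := by
      rw [map_mul, Complex.conj_ofReal]
      have : (a:ℂ) * u * ((b:ℂ) * (starRingEnd ℂ) v) = ((a*b : ℝ) : ℂ) * (u * (starRingEnd ℂ) v) := by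
        push_cast; ring
      rw [this, Complex.re_ofReal_mul]
    rw [h1, h2, h3]; ring
  have hkey : (1 - s) / 2 * (a + b) ^ 2 ≤ a ^ 2 + b ^ 2 - 2 * (a * b) * t := by
    nlinarith [sq_nonneg (a - b), sq_nonneg (a + b), mul_nonneg ha hb,
      mul_le_mul_of_nonneg_left hst (mul_nonneg ha hb)]
  calc Real.sqrt ((1 - s) / 2) * (a + b)
      = Real.sqrt ((1 - s) / 2 * (a + b) ^ 2) := by
        rw [Real.sqrt_mul (by linarith), Real.sqrt_sq (by linarith)]
    _ ≤ Real.sqrt (a ^ 2 + b ^ 2 - 2 * (a * b) * t) := Real.sqrt_le_sqrt hkey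
    _ = ‖(a : ℂ) * u - (b : ℂ) * v‖ := by
        rw [← hnormSq, Complex.norm_def]

set_option maxHeartbeats 1000000 in
/-- Along any ray avoiding the asymptotic direction of the lattice `w_m = d(m+ξ)`,
the sum of differences `1/(ω - w_m) - 1/(ω - w_m - δ_m)` decays faster than `1/|ω|`,
provided the perturbations satisfy `|δ_m| ≤ K m^{-ε}`. -/
theorem stmt_3
    (d ξ : ℂ) (δ : ℕ → ℂ) (K ε φ : ℝ)
    (hd : d ≠ 0)
    (hw0 : ∀ m : ℕ, d * ((m : ℂ) + 1 + ξ) ≠ 0)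
    (hK : 0 < K) (hε : 0 < ε)
    (hδ : ∀ m : ℕ, ‖δ m‖ ≤ K * ((m : ℝ) + 1) ^ (-ε))
    (hφ : Complex.exp ((φ : ℂ) * Complex.I) ≠ d / ((‖d‖ : ℝ) : ℂ))
    (havoid : ∀ r : ℝ, 0 < r → ∀ m : ℕ,
      (r : ℂ) * Complex.exp ((φ : ℂ) * Complex.I) ≠ d * ((m : ℂ) + 1 + ξ) ∧
      (r : ℂ) * Complex.exp ((φ : ℂ) * Complex.I) ≠ d * ((m : ℂ) + 1 + ξ) + δ m) :
    (∀ᶠ r : ℝ in atTop, Summable (fun m : ℕ =>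
        1 / ((r : ℂ) * Complex.exp ((φ : ℂ) * Complex.I) - d * ((m : ℂ) + 1 + ξ)) -
        1 / ((r : ℂ) * Complex.exp ((φ : ℂ) * Complex.I) - d * ((m : ℂ) + 1 + ξ) - δ m))) ∧
    Tendsto (fun r : ℝ => (r : ℂ) * ∑' m : ℕ,
        (1 / ((r : ℂ) * Complex.exp ((φ : ℂ) * Complex.I) - d * ((m : ℂ) + 1 + ξ)) -
         1 / ((r : ℂ) * Complex.exp ((φ : ℂ) * Complex.I) - d * ((m : ℂ) + 1 + ξ) - δ m)))
      atTop (𝓝 0) := by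
  set u : ℂ := Complex.exp ((φ : ℂ) * Complex.I) with hu_def
  have hdabs : (0:ℝ) < ‖d‖ := norm_pos_iff.2 hd
  have hu1 : ‖u‖ = 1 := Complex.norm_exp_ofReal_mul_I φ
  have hv1 : ‖d / ((‖d‖ : ℝ) : ℂ)‖ = 1 := by
    rw [norm_div, Complex.norm_real, Real.norm_eq_abs, abs_of_pos hdabs, div_self hdabs.ne']
  obtain ⟨c, hc, hsep⟩ := key_sep u (d / ((‖d‖ : ℝ) : ℂ)) hu1 hv1 hφ
  set c₂ : ℝ := c * min 1 (‖d‖) / 2 with hc2_def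
  have hc2 : 0 < c₂ := by
    have : 0 < min 1 (‖d‖) := lt_min one_pos hdabs
    positivity
  set M : ℝ := ‖d * ξ‖ + K with hM_def
  have hM0 : 0 < M := by positivity
  set R : ℝ := max (M / c₂) 1 with hR_def
  -- basic facts about the perturbations
  have hδK : ∀ m : ℕ, ‖δ m‖ ≤ K := by
    intro m
    refine (hδ m).trans ?_
    have : ((m:ℝ)+1) ^ (-ε) ≤ 1 :=
      Real.rpow_le_one_of_one_le_of_nonpos (le_add_of_nonneg_left (Nat.cast_nonneg m)) (by linarith)
    nlinarith
  -- the fundamental lower bound on the distances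
  have hlow : ∀ r : ℝ, R ≤ r → ∀ m : ℕ,
      c₂ * (r + m + 1) ≤ ‖(r:ℂ) * u - d * ((m : ℂ) + 1 + ξ)‖ ∧
      c₂ * (r + m + 1) ≤ ‖(r:ℂ) * u - d * ((m : ℂ) + 1 + ξ) - δ m‖ := by
    intro r hr m
    have hr1 : (1:ℝ) ≤ r := le_trans (le_max_right _ _) hr
    have hr0 : (0:ℝ) ≤ r := by linarith
    have hMr : M ≤ c₂ * r := by
      have h1 : M / c₂ ≤ r := le_trans (le_max_left _ _) hr
      calc M = c₂ * (M / c₂) := by field_simp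
      _ ≤ c₂ * r := by nlinarith
    have hm1 : (0:ℝ) ≤ (m:ℝ) + 1 := by positivity
    have hdecomp : (r:ℂ) * u - d * ((m : ℂ) + 1 + ξ)
        = ((r:ℝ):ℂ) * u - ((‖d‖ * ((m:ℝ) + 1) : ℝ):ℂ) * (d / ((‖d‖ : ℝ) : ℂ)) - d * ξ := by
      have h0 : ((‖d‖ : ℝ) : ℂ) ≠ 0 := by
        simpa using hdabs.ne'
      field_simp
      push_cast
      ring
    have hsep' := hsep r (‖d‖ * ((m:ℝ) + 1)) hr0 (by positivity)
    have h2c : 2 * c₂ * (r + m + 1) ≤ c * (r + ‖d‖ * ((m:ℝ) + 1)) := by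
      have e1 : c * min 1 (‖d‖) * r ≤ c * 1 * r :=
        mul_le_mul_of_nonneg_right
          (mul_le_mul_of_nonneg_left (min_le_left _ _) hc.le) hr0
      have e2 : c * min 1 (‖d‖) * ((m:ℝ)+1) ≤ c * ‖d‖ * ((m:ℝ)+1) :=
        mul_le_mul_of_nonneg_right
          (mul_le_mul_of_nonneg_left (min_le_right _ _) hc.le) hm1
      calc 2 * c₂ * (r + m + 1)
          = c * min 1 (‖d‖) * r + c * min 1 (‖d‖) * ((m:ℝ)+1) := by
            rw [hc2_def]; ring
      _ ≤ c * 1 * r + c * ‖d‖ * ((m:ℝ)+1) := add_le_add e1 e2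
      _ = c * (r + ‖d‖ * ((m:ℝ)+1)) := by ring
    have hMle : M ≤ c₂ * (r + m + 1) := by nlinarith
    constructor
    · have hkey : ‖((r:ℝ):ℂ) * u - ((‖d‖ * ((m:ℝ) + 1) : ℝ):ℂ) * (d / ((‖d‖ : ℝ) : ℂ))‖
          - ‖d * ξ‖
          ≤ ‖(r:ℂ) * u - d * ((m : ℂ) + 1 + ξ)‖ := by
        rw [hdecomp]
        simpa using
          norm_sub_norm_le (((r:ℝ):ℂ) * u - ((‖d‖ * ((m:ℝ) + 1) : ℝ):ℂ) * (d / ((‖d‖ : ℝ) : ℂ))) (d * ξ)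
      have : ‖d * ξ‖ ≤ M := by rw [hM_def]; linarith
      linarith [hsep', hkey]
    · have hkey : ‖((r:ℝ):ℂ) * u - ((‖d‖ * ((m:ℝ) + 1) : ℝ):ℂ) * (d / ((‖d‖ : ℝ) : ℂ))‖
          - ‖d * ξ + δ m‖
          ≤ ‖(r:ℂ) * u - d * ((m : ℂ) + 1 + ξ) - δ m‖ := by
        have heq : (r:ℂ) * u - d * ((m : ℂ) + 1 + ξ) - δ m
            = (((r:ℝ):ℂ) * u - ((‖d‖ * ((m:ℝ) + 1) : ℝ):ℂ) * (d / ((‖d‖ : ℝ) : ℂ))) - (d * ξ + δ m) := by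
          rw [show (r:ℂ) * u - d * ((m : ℂ) + 1 + ξ) - δ m
              = ((r:ℂ) * u - d * ((m : ℂ) + 1 + ξ)) - δ m from by ring, hdecomp]
          ring
        rw [heq]
        simpa using
          norm_sub_norm_le (((r:ℝ):ℂ) * u - ((‖d‖ * ((m:ℝ) + 1) : ℝ):ℂ) * (d / ((‖d‖ : ℝ) : ℂ))) (d * ξ + δ m)
      have : ‖d * ξ + δ m‖ ≤ M := by
        rw [hM_def]
        calc ‖d * ξ + δ m‖ ≤ ‖d * ξ‖ + ‖δ m‖ :=
          norm_add_le _ _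
        _ ≤ ‖d * ξ‖ + K := by linarith [hδK m]
      linarith [hsep', hkey]
  -- pointwise bound on the individual terms
  have hterm : ∀ r : ℝ, R ≤ r → ∀ m : ℕ,
      ‖1 / ((r:ℂ) * u - d * ((m : ℂ) + 1 + ξ))
        - 1 / ((r:ℂ) * u - d * ((m : ℂ) + 1 + ξ) - δ m)‖
      ≤ K * ((m:ℝ) + 1) ^ (-ε) / (c₂ * (r + m + 1)) ^ 2 := by
    intro r hr m
    have hr1 : (1:ℝ) ≤ r := le_trans (le_max_right _ _) hr
    obtain ⟨hA, hB⟩ := hlow r hr m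
    have hpos : 0 < c₂ * (r + m + 1) := by positivity
    have hA0 : (r:ℂ) * u - d * ((m : ℂ) + 1 + ξ) ≠ 0 := by
      intro h
      rw [h] at hA
      simp at hA
      linarith
    have hB0 : (r:ℂ) * u - d * ((m : ℂ) + 1 + ξ) - δ m ≠ 0 := by
      intro h
      rw [h] at hB
      simp at hB
      linarith
    have hid : 1 / ((r:ℂ) * u - d * ((m : ℂ) + 1 + ξ))
        - 1 / ((r:ℂ) * u - d * ((m : ℂ) + 1 + ξ) - δ m)
        = -δ m / (((r:ℂ) * u - d * ((m : ℂ) + 1 + ξ)) * ((r:ℂ) * u - d * ((m : ℂ) + 1 + ξ) - δ m)) := by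
      field_simp
      ring
    rw [hid, norm_div, norm_neg, norm_mul]
    refine div_le_div₀ (by positivity) (hδ m) (by positivity) ?_
    calc (c₂ * (r + m + 1)) ^ 2 = (c₂ * (r + m + 1)) * (c₂ * (r + m + 1)) := sq _
    _ ≤ ‖(r:ℂ) * u - d * ((m : ℂ) + 1 + ξ)‖
        * ‖(r:ℂ) * u - d * ((m : ℂ) + 1 + ξ) - δ m‖ :=
      mul_le_mul hA hB hpos.le (norm_nonneg _)
  -- the summable bound
  set bound : ℕ → ℝ := fun m => (K / c₂ ^ 2) * ((m:ℝ) + 1) ^ (-(1 + ε)) with hbound_def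
  have hsum_bound : Summable bound := by
    apply Summable.mul_left
    have h1 : Summable (fun n : ℕ => (n:ℝ) ^ (-(1 + ε))) :=
      Real.summable_nat_rpow.2 (by linarith)
    have h2 := (summable_nat_add_iff 1).2 h1
    refine h2.congr fun n => ?_
    push_cast
    ring_nf
  have hboundeq : ∀ m : ℕ, bound m = K * ((m:ℝ) + 1) ^ (-ε) / (c₂ ^ 2 * ((m:ℝ) + 1)) := by
    intro m
    have hm : (0:ℝ) < (m:ℝ) + 1 := by positivity
    have : ((m:ℝ)+1) ^ (-(1 + ε)) = ((m:ℝ)+1) ^ (-ε) * ((m:ℝ)+1)⁻¹ := by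
      rw [← Real.rpow_neg_one ((m:ℝ)+1), ← Real.rpow_add hm]
      congr 1
      ring
    rw [hbound_def]
    simp only [this]
    field_simp
  -- domination
  have hdom : ∀ r : ℝ, R ≤ r → ∀ m : ℕ,
      ‖(r:ℂ) * (1 / ((r:ℂ) * u - d * ((m : ℂ) + 1 + ξ))
        - 1 / ((r:ℂ) * u - d * ((m : ℂ) + 1 + ξ) - δ m))‖ ≤ bound m := by
    intro r hr m
    have hr1 : (1:ℝ) ≤ r := le_trans (le_max_right _ _) hr
    have hr0 : (0:ℝ) < r := by linarith
    have hm : (0:ℝ) < (m:ℝ) + 1 := by positivity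
    have hnorm : ‖(r:ℂ) * (1 / ((r:ℂ) * u - d * ((m : ℂ) + 1 + ξ))
        - 1 / ((r:ℂ) * u - d * ((m : ℂ) + 1 + ξ) - δ m))‖
        = r * ‖1 / ((r:ℂ) * u - d * ((m : ℂ) + 1 + ξ))
        - 1 / ((r:ℂ) * u - d * ((m : ℂ) + 1 + ξ) - δ m)‖ := by
      rw [norm_mul, Complex.norm_real, Real.norm_eq_abs, abs_of_pos hr0]
    rw [hnorm, hboundeq m]
    have h1 := hterm r hr m
    have h2 : r * (K * ((m:ℝ) + 1) ^ (-ε) / (c₂ * (r + m + 1)) ^ 2)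
        ≤ K * ((m:ℝ) + 1) ^ (-ε) / (c₂ ^ 2 * ((m:ℝ) + 1)) := by
      rw [mul_div_assoc', div_le_div_iff₀ (by positivity) (by positivity)]
      have hN : (0:ℝ) ≤ K * ((m:ℝ) + 1) ^ (-ε) := by positivity
      have hq : r * ((m:ℝ)+1) ≤ (r + m + 1) ^ 2 := by nlinarith
      calc r * (K * ((m:ℝ) + 1) ^ (-ε)) * (c₂ ^ 2 * ((m:ℝ) + 1))
          = (K * ((m:ℝ) + 1) ^ (-ε)) * c₂ ^ 2 * (r * ((m:ℝ)+1)) := by ring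
      _ ≤ (K * ((m:ℝ) + 1) ^ (-ε)) * c₂ ^ 2 * ((r + m + 1) ^ 2) := mul_le_mul_of_nonneg_left hq (by positivity)
      _ = K * ((m:ℝ) + 1) ^ (-ε) * (c₂ * (r + ↑m + 1)) ^ 2 := by ring
    calc r * ‖_‖ ≤ r * (K * ((m:ℝ) + 1) ^ (-ε) / (c₂ * (r + m + 1)) ^ 2) := by
          exact mul_le_mul_of_nonneg_left h1 hr0.le
    _ ≤ K * ((m:ℝ) + 1) ^ (-ε) / (c₂ ^ 2 * ((m:ℝ) + 1)) := h2
  -- summability for every r ≥ R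
  have hsummable : ∀ r : ℝ, R ≤ r → Summable (fun m : ℕ =>
      1 / ((r:ℂ) * u - d * ((m : ℂ) + 1 + ξ))
        - 1 / ((r:ℂ) * u - d * ((m : ℂ) + 1 + ξ) - δ m)) := by
    intro r hr
    have hr1 : (1:ℝ) ≤ r := le_trans (le_max_right _ _) hr
    have hrC0 : (r:ℂ) ≠ 0 := by
      simp only [ne_eq, Complex.ofReal_eq_zero]
      linarith
    have hs1 : Summable (fun m : ℕ => (r:ℂ) * (1 / ((r:ℂ) * u - d * ((m : ℂ) + 1 + ξ))
        - 1 / ((r:ℂ) * u - d * ((m : ℂ) + 1 + ξ) - δ m))) :=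
      Summable.of_norm_bounded hsum_bound (fun m => hdom r hr m)
    have := hs1.mul_left ((r:ℂ)⁻¹)
    simpa [inv_mul_cancel_left₀ hrC0] using this
  -- pointwise limits
  have hpoint : ∀ m : ℕ, Tendsto (fun r : ℝ => (r:ℂ) * (1 / ((r:ℂ) * u - d * ((m : ℂ) + 1 + ξ))
      - 1 / ((r:ℂ) * u - d * ((m : ℂ) + 1 + ξ) - δ m))) atTop (𝓝 0) := by
    intro m
    have hm : (0:ℝ) < (m:ℝ) + 1 := by positivity
    apply squeeze_zero_norm' (a := fun r : ℝ => (K / c₂ ^ 2) * r⁻¹)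
    · filter_upwards [eventually_ge_atTop R] with r hr
      have hr1 : (1:ℝ) ≤ r := le_trans (le_max_right _ _) hr
      have hr0 : (0:ℝ) < r := by linarith
      have hnorm : ‖(r:ℂ) * (1 / ((r:ℂ) * u - d * ((m : ℂ) + 1 + ξ))
          - 1 / ((r:ℂ) * u - d * ((m : ℂ) + 1 + ξ) - δ m))‖
          = r * ‖1 / ((r:ℂ) * u - d * ((m : ℂ) + 1 + ξ))
          - 1 / ((r:ℂ) * u - d * ((m : ℂ) + 1 + ξ) - δ m)‖ := by
        rw [norm_mul, Complex.norm_real, Real.norm_eq_abs, abs_of_pos hr0]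
      rw [hnorm]
      have h1 := hterm r hr m
      have hp1 : ((m:ℝ)+1) ^ (-ε) ≤ 1 :=
        Real.rpow_le_one_of_one_le_of_nonpos (by linarith) (by linarith)
      have h2 : K * ((m:ℝ) + 1) ^ (-ε) / (c₂ * (r + m + 1)) ^ 2 ≤ K / (c₂ ^ 2 * r ^ 2) := by
        refine div_le_div₀ (by positivity) (by nlinarith) (by positivity) ?_
        have : c₂ * r ≤ c₂ * (r + m + 1) := by nlinarith
        calc c₂ ^ 2 * r ^ 2 = (c₂ * r) ^ 2 := by ring
        _ ≤ (c₂ * (r + m + 1)) ^ 2 := pow_le_pow_left₀ (by positivity) this 2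
      have h3 : r * (K / (c₂ ^ 2 * r ^ 2)) = (K / c₂ ^ 2) * r⁻¹ := by
        field_simp
      calc r * ‖_‖ ≤ r * (K * ((m:ℝ) + 1) ^ (-ε) / (c₂ * (r + m + 1)) ^ 2) :=
            mul_le_mul_of_nonneg_left h1 hr0.le
      _ ≤ r * (K / (c₂ ^ 2 * r ^ 2)) := mul_le_mul_of_nonneg_left h2 hr0.le
      _ = (K / c₂ ^ 2) * r⁻¹ := h3
    · have := (tendsto_inv_atTop_zero (𝕜 := ℝ)).const_mul (K / c₂ ^ 2)
      simpa using this
  constructor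
  · filter_upwards [eventually_ge_atTop R] with r hr
    exact hsummable r hr
  · have hmain := tendsto_tsum_of_dominated_convergence
      (f := fun (r : ℝ) (m : ℕ) => (r:ℂ) * (1 / ((r:ℂ) * u - d * ((m : ℂ) + 1 + ξ))
        - 1 / ((r:ℂ) * u - d * ((m : ℂ) + 1 + ξ) - δ m)))
      (g := fun _ : ℕ => (0:ℂ)) hsum_bound hpoint ?_
    · rw [tsum_zero] at hmain
      simpa only [tsum_mul_left] using hmain
    · filter_upwards [eventually_ge_atTop R] with r hr
      exact fun m => hdom r hr m
end

section
/- Let G be a meromorphic-type function with simple zeros (z_n) and simple poles (p_n) as in the context, and let n₋(R) and n₊(R) denote the number of zeros and poles of modulus less than R, respectively. If there is a constant C > 0 such that for every N, |G'(ω)/G(ω)| ≤ C/R_N for all ω with |ω| = R_N, then |n₋(R_N) − n₊(R_N)| ≤ C for every N; in particular, liminf_{R→∞} |n₋(R) − n₊(R)| ≤ C. -/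
open Complex Filter Topology Metric


lemma aux_isolated {p : ℕ → ℂ}
    (hfin : ∀ r : ℝ, {n : ℕ | ‖p n‖ < r}.Finite) (w : ℂ) :
    ∀ᶠ u in 𝓝[≠] w, u ∉ Set.range p := by
  set S : Set ℂ := (p '' {n | ‖p n‖ < ‖w‖ + 2}) \ {w} with hS
  have hSfin : S.Finite := (((hfin _).image p).subset Set.diff_subset)
  have hwS : w ∉ S := fun h => h.2 rfl
  have h1 : ∀ᶠ u in 𝓝 w, u ∉ S :=
    hSfin.isClosed.isOpen_compl.mem_nhds hwS
  have h2 : ∀ᶠ u in 𝓝 w, dist u w < 1 := Metric.ball_mem_nhds w one_pos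
  filter_upwards [h1.filter_mono nhdsWithin_le_nhds, h2.filter_mono nhdsWithin_le_nhds,
    self_mem_nhdsWithin] with u hu1 hu2 hu3
  rintro ⟨n, rfl⟩
  apply hu1
  refine ⟨⟨n, ?_, rfl⟩, hu3⟩
  have : ‖p n‖ ≤ ‖w‖ + ‖p n - w‖ := by
    simpa using norm_le_norm_add_norm_sub' (p n) w
  rw [Complex.dist_eq] at hu2
  simp only [Set.mem_setOf_eq]
  linarith

lemma aux_nhds_not_range {p : ℕ → ℂ}
    (hfin : ∀ r : ℝ, {n : ℕ | ‖p n‖ < r}.Finite) {w : ℂ}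
    (hw : w ∉ Set.range p) : ∀ᶠ u in 𝓝 w, u ∉ Set.range p := by
  rw [← nhdsNE_sup_pure w, eventually_sup]
  exact ⟨aux_isolated hfin w, by simpa using hw⟩

lemma aux_analyticAt_deriv {f : ℂ → ℂ} {w : ℂ} (hf : AnalyticAt ℂ f w) :
    AnalyticAt ℂ (deriv f) w := by
  obtain ⟨s, hs, hso, hws⟩ := _root_.eventually_nhds_iff.1 hf.eventually_analyticAt
  exact (AnalyticOnNhd.deriv (fun x hx => hs x hx)) w hws

lemma aux_circleIntegrable_sum {ι : Type*} (s : Finset ι) (f : ι → ℂ → ℂ) (c : ℂ) (R : ℝ)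
    (h : ∀ i ∈ s, CircleIntegrable (f i) c R) :
    CircleIntegrable (fun w => ∑ i ∈ s, f i w) c R := by
  classical
  induction s using Finset.induction with
  | empty => simp only [Finset.sum_empty]; exact circleIntegrable_const (0 : ℂ) c R
  | insert _ _ hni ih =>
    rename_i a t
    simp only [Finset.sum_insert hni]
    exact (h a (Finset.mem_insert_self a t)).add
      (ih fun i hi => h i (Finset.mem_insert_of_mem hi))

lemma aux_circleIntegral_add {f g : ℂ → ℂ} {c : ℂ} {R : ℝ} (hf : CircleIntegrable f c R)
    (hg : CircleIntegrable g c R) :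
    (∮ z in C(c, R), (f z + g z)) = (∮ z in C(c, R), f z) + ∮ z in C(c, R), g z := by
  simp only [circleIntegral, smul_add, intervalIntegral.integral_add hf.out hg.out]

lemma aux_circleIntegral_sum {ι : Type*} (s : Finset ι) (f : ι → ℂ → ℂ) (c : ℂ) (R : ℝ)
    (h : ∀ i ∈ s, CircleIntegrable (f i) c R) :
    (∮ w in C(c, R), ∑ i ∈ s, f i w) = ∑ i ∈ s, ∮ w in C(c, R), f i w := by
  classical
  induction s using Finset.induction with
  | empty => simp [circleIntegral]
  | insert _ _ hni ih =>
    rename_i a t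
    simp only [Finset.sum_insert hni]
    rw [aux_circleIntegral_add (h a (Finset.mem_insert_self a t))
      (aux_circleIntegrable_sum t f c R fun i hi => h i (Finset.mem_insert_of_mem hi)),
      ih fun i hi => h i (Finset.mem_insert_of_mem hi)]

lemma aux_key (G : ℂ → ℂ) (Z P : Finset ℂ) (r C : ℝ) (hr : 0 < r)
    (hZr : ∀ a ∈ Z, ‖a‖ < r) (hPr : ∀ a ∈ P, ‖a‖ < r)
    (hZP : ∀ a ∈ Z, a ∉ P)
    (hd : ∀ w : ℂ, ‖w‖ ≤ r → w ∉ (P : Set ℂ) → AnalyticAt ℂ G w)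
    (hz : ∀ w : ℂ, ‖w‖ ≤ r → (G w = 0 ↔ w ∈ Z))
    (hzs : ∀ a ∈ Z, deriv G a ≠ 0)
    (hp : ∀ a ∈ P, ∃ ρ : ℂ, ρ ≠ 0 ∧ Tendsto (fun w => (w - a) * G w) (𝓝[≠] a) (𝓝 ρ))
    (hbound : ∀ w : ℂ, ‖w‖ = r → ‖deriv G w / G w‖ ≤ C / r) :
    |(Z.card : ℝ) - (P.card : ℝ)| ≤ C := by
  classical
  set B : Finset ℂ := Z ∪ P with hB
  set F₀ : ℂ → ℂ := fun w =>
    deriv G w / G w - (∑ a ∈ Z, (w - a)⁻¹) + ∑ a ∈ P, (w - a)⁻¹ with hF₀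
  have hBr : ∀ a ∈ B, ‖a‖ < r := by
    intro a ha
    rcases Finset.mem_union.1 ha with h | h
    exacts [hZr a h, hPr a h]
  -- F₀ is differentiable at good points
  have hgood : ∀ w : ℂ, ‖w‖ ≤ r → w ∉ (B : Set ℂ) → DifferentiableAt ℂ F₀ w := by
    intro w hwr hwB
    have hwB' : w ∉ B := fun h => hwB (Finset.mem_coe.2 h)
    have hwP : w ∉ (P : Set ℂ) := fun h =>
      hwB' (Finset.mem_union_right _ (Finset.mem_coe.1 h))
    have hwZ : w ∉ Z := fun h => hwB' (Finset.mem_union_left _ h)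
    have hG : AnalyticAt ℂ G w := hd w hwr hwP
    have hG0 : G w ≠ 0 := fun h => hwZ ((hz w hwr).1 h)
    have h1 : DifferentiableAt ℂ (fun u => deriv G u / G u) w :=
      (aux_analyticAt_deriv hG).differentiableAt.div hG.differentiableAt hG0
    have hsum : ∀ (s : Finset ℂ), (∀ b ∈ s, b ∈ B) →
        DifferentiableAt ℂ (fun u => ∑ b ∈ s, (u - b)⁻¹) w := by
      intro s hs
      apply DifferentiableAt.fun_sum
      intro b hb
      have hwb : w - b ≠ 0 := sub_ne_zero.2 (fun h => hwB' (h ▸ hs b hb))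
      exact ((differentiableAt_id.sub_const b).inv hwb)
    exact (h1.sub (hsum Z fun b hb => Finset.mem_union_left _ hb)).add
      (hsum P fun b hb => Finset.mem_union_right _ hb)
  -- local limits of F₀ at the bad points
  have hlim : ∀ a ∈ B, ∃ L, Tendsto F₀ (𝓝[≠] a) (𝓝 L) := by
    intro a haB
    rcases Finset.mem_union.1 haB with haZ | haP
    · -- a is a simple zero
      have har : ‖a‖ < r := hZr a haZ
      have haP : a ∉ (P : Set ℂ) := fun h => hZP a haZ (Finset.mem_coe.1 h)
      have hG : AnalyticAt ℂ G a := hd a har.le haP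
      obtain ⟨pp, hpp⟩ := hG
      have hganal : AnalyticAt ℂ (dslope G a) a :=
        (hpp.has_fpower_series_dslope_fslope).analyticAt
      set g : ℂ → ℂ := dslope G a with hgdef
      have hGa : G a = 0 := (hz a har.le).2 haZ
      have hfac : ∀ w, G w = (w - a) * g w := by
        intro w
        rcases eq_or_ne w a with rfl | hwa
        · simp [hGa]
        · rw [hgdef, dslope_of_ne _ hwa, slope, vsub_eq_sub, smul_eq_mul, hGa, sub_zero]
          field_simp [sub_ne_zero.2 hwa]
      have hga : g a = deriv G a := dslope_same G a
      have hga0 : g a ≠ 0 := by rw [hga]; exact hzs a haZ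
      have hev1 : ∀ᶠ w in 𝓝 a, AnalyticAt ℂ g w := hganal.eventually_analyticAt
      have hev2 : ∀ᶠ w in 𝓝 a, g w ≠ 0 := hganal.continuousAt.eventually_ne hga0
      have hev3 : ∀ᶠ w in 𝓝 a, deriv G w = g w + (w - a) * deriv g w := by
        filter_upwards [hev1] with w hw
        have hGe : G = fun u => (u - a) * g u := funext hfac
        have h1 : HasDerivAt (fun u : ℂ => (u - a) * g u)
            (1 * g w + (w - a) * deriv g w) w :=
          ((hasDerivAt_id w).sub_const a).mul hw.differentiableAt.hasDerivAt
        rw [hGe, h1.deriv, one_mul]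
      refine ⟨deriv g a / g a - (∑ b ∈ Z.erase a, (a - b)⁻¹) + ∑ b ∈ P, (a - b)⁻¹, ?_⟩
      have hcont : Tendsto (fun w => deriv g w / g w - (∑ b ∈ Z.erase a, (w - b)⁻¹)
          + ∑ b ∈ P, (w - b)⁻¹) (𝓝 a)
          (𝓝 (deriv g a / g a - (∑ b ∈ Z.erase a, (a - b)⁻¹) + ∑ b ∈ P, (a - b)⁻¹)) := by
        apply ContinuousAt.tendsto
        have hne : ∀ (s : Finset ℂ), a ∉ s →
            ContinuousAt (fun w => ∑ b ∈ s, (w - b)⁻¹) a := by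
          intro s has
          refine (DifferentiableAt.fun_sum (𝕜 := ℂ) fun b hb => ?_).continuousAt
          refine (differentiableAt_id.sub_const b).inv (sub_ne_zero.2 ?_)
          rintro rfl
          exact has hb
        exact (((aux_analyticAt_deriv hganal).continuousAt.div hganal.continuousAt hga0).sub
          (hne _ (Finset.notMem_erase a Z))).add
          (hne _ (fun h => haP (Finset.mem_coe.2 h)))
      refine Tendsto.congr' ?_ (hcont.mono_left nhdsWithin_le_nhds)
      filter_upwards [(hev2.and hev3).filter_mono nhdsWithin_le_nhds,
        self_mem_nhdsWithin] with w hw hwa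
      obtain ⟨hw2, hw3⟩ := hw
      have hwa' : (w : ℂ) - a ≠ 0 := sub_ne_zero.2 hwa
      have hdGG : deriv G w / G w = (w - a)⁻¹ + deriv g w / g w := by
        rw [hw3, hfac w]
        field_simp
      have hsplit : (∑ b ∈ Z, (w - b)⁻¹) = (w - a)⁻¹ + ∑ b ∈ Z.erase a, (w - b)⁻¹ :=
        (Finset.add_sum_erase Z (fun b => (w - b)⁻¹) haZ).symm
      simp only [hF₀, hdGG, hsplit]
      ring
    · -- a is a simple pole
      have har : ‖a‖ < r := hPr a haP
      obtain ⟨ρ, hρ0, hρ⟩ := hp a haP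
      have hnear : ∀ᶠ w in 𝓝[≠] a, AnalyticAt ℂ G w := by
        have h1 : ∀ᶠ w in 𝓝 a, ‖w‖ < r :=
          continuous_norm.continuousAt (Iio_mem_nhds har)
        have h2 : ∀ᶠ w in 𝓝 a, w ∉ ((P.erase a : Finset ℂ) : Set ℂ) :=
          (P.erase a).finite_toSet.isClosed.isOpen_compl.mem_nhds
            (by simp)
        filter_upwards [h1.filter_mono nhdsWithin_le_nhds,
          h2.filter_mono nhdsWithin_le_nhds, self_mem_nhdsWithin] with w hw1 hw2 hwa
        refine hd w hw1.le (fun hwP => hw2 ?_)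
        simp only [Finset.coe_erase, Set.mem_diff, Set.mem_singleton_iff]
        exact ⟨hwP, hwa⟩
      have hbdd : ∀ᶠ w in 𝓝[≠] a, ‖(w - a) * G w‖ ≤ ‖ρ‖ + 1 := by
        have h := hρ.norm.eventually_lt_const (lt_add_one ‖ρ‖)
        exact h.mono fun w hw => hw.le
      have hball : ∃ ε > 0, ∀ w ∈ ball a ε \ {a},
          AnalyticAt ℂ G w ∧ ‖(w - a) * G w‖ ≤ ‖ρ‖ + 1 := by
        have hcomb := hnear.and hbdd
        rw [eventually_nhdsWithin_iff] at hcomb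
        rw [Metric.eventually_nhds_iff] at hcomb
        obtain ⟨ε, hε, h⟩ := hcomb
        refine ⟨ε, hε, fun w hw => h (by simpa [Metric.mem_ball] using hw.1) ?_⟩
        simpa using hw.2
      obtain ⟨ε, hε, hball⟩ := hball
      set f : ℂ → ℂ := fun w => (w - a) * G w with hfdef
      have hdf : DifferentiableOn ℂ f (ball a ε \ {a}) := fun w hw =>
        ((differentiableAt_id.sub_const a).mul
          (hball w hw).1.differentiableAt).differentiableWithinAt
      have hbf : BddAbove (norm ∘ f '' (ball a ε \ {a})) := by
        refine ⟨‖ρ‖ + 1, ?_⟩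
        rintro x ⟨w, hw, rfl⟩
        exact (hball w hw).2
      have hupd := Complex.differentiableOn_update_limUnder_of_bddAbove
        (ball_mem_nhds a hε) hdf hbf
      have hlimf : limUnder (𝓝[≠] a) f = ρ := hρ.limUnder_eq
      rw [hlimf] at hupd
      set h : ℂ → ℂ := Function.update f a ρ with hhdef
      have hha : h a = ρ := Function.update_self a ρ f
      have hh_ev_diff : ∀ᶠ w in 𝓝 a, DifferentiableAt ℂ h w := by
        filter_upwards [isOpen_ball.mem_nhds (mem_ball_self hε)] with w hw
        exact hupd.differentiableAt (isOpen_ball.mem_nhds hw)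
      have hh_an : AnalyticAt ℂ h a :=
        Complex.analyticAt_iff_eventually_differentiableAt.2 hh_ev_diff
      have hh0 : h a ≠ 0 := by rw [hha]; exact hρ0
      have hh_eq : ∀ w, w ≠ a → h w = (w - a) * G w := fun w hw =>
        Function.update_of_ne hw ρ f
      -- eventual formula for the logarithmic derivative near the pole
      have hev : ∀ᶠ w in 𝓝[≠] a,
          deriv G w / G w = deriv h w / h w - (w - a)⁻¹ := by
        have hevh0 : ∀ᶠ w in 𝓝 a, h w ≠ 0 := hh_an.continuousAt.eventually_ne hh0
        filter_upwards [hevh0.filter_mono nhdsWithin_le_nhds,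
          hh_ev_diff.filter_mono nhdsWithin_le_nhds, self_mem_nhdsWithin] with w hw0 hwd hwa
        have hwa' : w - a ≠ 0 := sub_ne_zero.2 hwa
        have hGeq : G =ᶠ[𝓝 w] fun u => h u * (u - a)⁻¹ := by
          filter_upwards [isOpen_compl_singleton.mem_nhds hwa] with u hu
          have hu' : u ≠ a := hu
          rw [hh_eq u hu', mul_comm (u - a) (G u), mul_assoc,
            mul_inv_cancel₀ (sub_ne_zero.2 hu'), mul_one]
        have hinv : HasDerivAt (fun u : ℂ => (u - a)⁻¹)
            (-1 / ((w - a) ^ 2)) w := by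
          exact (((hasDerivAt_id w).sub_const a).inv hwa').congr_deriv (by simp)
        have hder : deriv G w = deriv h w * (w - a)⁻¹ + h w * (-1 / ((w - a) ^ 2)) := by
          rw [hGeq.deriv_eq]
          exact (hwd.hasDerivAt.mul hinv).deriv
        have hGw : G w = h w * (w - a)⁻¹ := hGeq.self_of_nhds
        rw [hder, hGw]
        field_simp
        ring
      refine ⟨deriv h a / ρ - (∑ b ∈ Z, (a - b)⁻¹) + ∑ b ∈ P.erase a, (a - b)⁻¹, ?_⟩
      have hcont : Tendsto (fun w => deriv h w / h w - (∑ b ∈ Z, (w - b)⁻¹)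
          + ∑ b ∈ P.erase a, (w - b)⁻¹) (𝓝 a)
          (𝓝 (deriv h a / ρ - (∑ b ∈ Z, (a - b)⁻¹) + ∑ b ∈ P.erase a, (a - b)⁻¹)) := by
        have : deriv h a / h a = deriv h a / ρ := by rw [hha]
        rw [← this]
        apply ContinuousAt.tendsto
        have hne : ∀ (s : Finset ℂ), a ∉ s →
            ContinuousAt (fun w => ∑ b ∈ s, (w - b)⁻¹) a := by
          intro s has
          refine (DifferentiableAt.fun_sum (𝕜 := ℂ) fun b hb => ?_).continuousAt
          refine (differentiableAt_id.sub_const b).inv (sub_ne_zero.2 ?_)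
          rintro rfl
          exact has hb
        exact (((aux_analyticAt_deriv hh_an).continuousAt.div hh_an.continuousAt hh0).sub
          (hne _ (fun hZa => hZP a hZa haP))).add (hne _ (Finset.notMem_erase a P))
      refine Tendsto.congr' ?_ (hcont.mono_left nhdsWithin_le_nhds)
      filter_upwards [hev] with w hw
      have hsplit : (∑ b ∈ P, (w - b)⁻¹) = (w - a)⁻¹ + ∑ b ∈ P.erase a, (w - b)⁻¹ :=
        (Finset.add_sum_erase P (fun b => (w - b)⁻¹) haP).symm
      simp only [hF₀, hw, hsplit]
      ring
  -- patched function
  set F : ℂ → ℂ := fun w => if w ∈ B then limUnder (𝓝[≠] w) F₀ else F₀ w with hF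
  have hFcongr : ∀ {w : ℂ}, w ∉ (B : Set ℂ) → F =ᶠ[𝓝 w] F₀ := by
    intro w hw
    filter_upwards [B.finite_toSet.isClosed.isOpen_compl.mem_nhds hw] with u hu
    simp only [hF, if_neg (fun h => hu (Finset.mem_coe.2 h))]
  have hFcont : ContinuousOn F (closedBall (0 : ℂ) r) := by
    intro w hw
    rw [mem_closedBall_zero_iff] at hw
    have hw' : ‖w‖ ≤ r := hw
    by_cases hwB : w ∈ (B : Set ℂ)
    · obtain ⟨L, hL⟩ := hlim w (Finset.mem_coe.1 hwB)
      have hFw : F w = L := by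
        simp only [hF, if_pos (Finset.mem_coe.1 hwB)]
        exact hL.limUnder_eq
      apply ContinuousAt.continuousWithinAt
      rw [ContinuousAt, hFw, ← nhdsNE_sup_pure w, tendsto_sup]
      constructor
      · have heq : ∀ᶠ u in 𝓝[≠] w, F₀ u = F u := by
          have hcl : ∀ᶠ u in 𝓝 w, u ∉ ((B : Set ℂ) \ {w}) :=
            (B.finite_toSet.diff : ((B : Set ℂ) \ {w}).Finite).isClosed.isOpen_compl.mem_nhds (fun h => h.2 rfl)
          filter_upwards [hcl.filter_mono nhdsWithin_le_nhds, self_mem_nhdsWithin] with u hu1 hu2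
          have : u ∉ B := fun h => hu1 ⟨Finset.mem_coe.2 h, hu2⟩
          simp only [hF, if_neg this]
        exact hL.congr' heq
      · exact hFw ▸ tendsto_pure_nhds F w
    · exact ((hgood w hw' hwB).continuousAt.congr (hFcongr hwB).symm).continuousWithinAt
  have hFdiff : ∀ w ∈ ball (0 : ℂ) r \ (B : Set ℂ), DifferentiableAt ℂ F w := by
    intro w hw
    rw [Set.mem_diff, mem_ball_zero_iff] at hw
    exact (hFcongr hw.2).symm.differentiableAt_iff.1 (hgood w hw.1.le hw.2)
  -- the circle integral of F vanishes
  have hFzero : (∮ w in C(0, r), F w) = 0 :=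
    Complex.circleIntegral_eq_zero_of_differentiable_on_off_countable hr.le
      B.finite_toSet.countable hFcont hFdiff
  -- integrability
  have hsphere_notB : ∀ w ∈ sphere (0 : ℂ) r, w ∉ (B : Set ℂ) := by
    intro w hw hwB
    rw [mem_sphere_zero_iff_norm] at hw
    exact absurd hw (ne_of_lt (hBr w (Finset.mem_coe.1 hwB)))
  have intF : CircleIntegrable F 0 r :=
    ContinuousOn.circleIntegrable hr.le (hFcont.mono sphere_subset_closedBall)
  have intInv : ∀ b ∈ B, CircleIntegrable (fun w => (w - b)⁻¹) 0 r := by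
    intro b hb
    refine circleIntegrable_sub_inv_iff.2 (Or.inr ?_)
    intro hmem
    rw [mem_sphere_zero_iff_norm, abs_of_pos hr] at hmem
    have := hBr b hb
    linarith
  have intsumZ : CircleIntegrable (fun w => ∑ b ∈ Z, (w - b)⁻¹) 0 r :=
    aux_circleIntegrable_sum Z _ 0 r fun b hb => intInv b (Finset.mem_union_left _ hb)
  have intsumP : CircleIntegrable (fun w => ∑ b ∈ P, (w - b)⁻¹) 0 r :=
    aux_circleIntegrable_sum P _ 0 r fun b hb => intInv b (Finset.mem_union_right _ hb)
  -- value of the integral of the logarithmic derivative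
  have hval : (∮ w in C(0, r), deriv G w / G w)
      = ((Z.card : ℂ) - (P.card : ℂ)) * (2 * ↑Real.pi * I) := by
    have heqon : Set.EqOn (fun w => deriv G w / G w)
        (fun w => (F w + ∑ b ∈ Z, (w - b)⁻¹) - ∑ b ∈ P, (w - b)⁻¹) (sphere (0:ℂ) r) := by
      intro w hw
      have hwB := hsphere_notB w hw
      simp only [hF, if_neg (fun h => hwB (Finset.mem_coe.2 h)), hF₀]
      ring
    rw [circleIntegral.integral_congr hr.le heqon,
      circleIntegral.integral_sub (f := fun w => F w + ∑ b ∈ Z, (w - b)⁻¹)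
        (g := fun w => ∑ b ∈ P, (w - b)⁻¹) (intF.add intsumZ) intsumP,
      aux_circleIntegral_add intF intsumZ, hFzero,
      aux_circleIntegral_sum Z _ 0 r (fun b hb => intInv b (Finset.mem_union_left _ hb)),
      aux_circleIntegral_sum P _ 0 r (fun b hb => intInv b (Finset.mem_union_right _ hb))]
    have hZv : ∀ b ∈ Z, (∮ w in C(0, r), (w - b)⁻¹) = 2 * ↑Real.pi * I := by
      intro b hb
      exact circleIntegral.integral_sub_inv_of_mem_ball (by
        rw [mem_ball_zero_iff]; simpa using hZr b hb)
    have hPv : ∀ b ∈ P, (∮ w in C(0, r), (w - b)⁻¹) = 2 * ↑Real.pi * I := by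
      intro b hb
      exact circleIntegral.integral_sub_inv_of_mem_ball (by
        rw [mem_ball_zero_iff]; simpa using hPr b hb)
    rw [Finset.sum_congr rfl hZv, Finset.sum_congr rfl hPv]
    simp [Finset.sum_const, nsmul_eq_mul]
    ring
  -- norm estimate
  have hnorm : ‖∮ w in C(0, r), deriv G w / G w‖ ≤ 2 * Real.pi * r * (C / r) := by
    have := circleIntegral.norm_integral_le_of_norm_le_const (c := (0:ℂ)) (R := r)
      (f := fun w => deriv G w / G w) (C := C / r) hr.le ?_
    · simpa [abs_of_pos hr] using this
    · intro w hw
      rw [mem_sphere_zero_iff_norm] at hw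
      simpa using hbound w (by simpa using hw)
  rw [hval] at hnorm
  have hcast : ((Z.card : ℂ) - (P.card : ℂ)) = (((Z.card : ℝ) - (P.card : ℝ) : ℝ) : ℂ) := by
    push_cast; ring
  rw [hcast] at hnorm
  have h2pi : (0:ℝ) < 2 * Real.pi := by positivity
  have hnval : ‖(((Z.card : ℝ) - (P.card : ℝ) : ℝ) : ℂ) * (2 * ↑Real.pi * I)‖
      = |(Z.card : ℝ) - (P.card : ℝ)| * (2 * Real.pi) := by
    rw [norm_mul, Complex.norm_real, Real.norm_eq_abs]
    congr 1
    rw [norm_mul, norm_mul, Complex.norm_I, Complex.norm_real, Complex.norm_two, Real.norm_eq_abs,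
      abs_of_pos Real.pi_pos, mul_one]
  rw [hnval] at hnorm
  have : 2 * Real.pi * r * (C / r) = 2 * Real.pi * C := by field_simp
  rw [this] at hnorm
  nlinarith [Real.pi_pos]

/-- If the logarithmic derivative of `G` is bounded by `C / R_N` on the circles `|ω| = R_N`,
then the numbers of zeros and poles inside these circles differ by at most `C`;
in particular, `liminf |n₋(R) − n₊(R)| ≤ C`. -/
theorem stmt_4
    (G : ℂ → ℂ) (z p ρ : ℕ → ℂ) (R : ℕ → ℝ) (C : ℝ)
    (hz_inj : Function.Injective z) (hp_inj : Function.Injective p)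
    (hz0 : ∀ n, z n ≠ 0) (hp0 : ∀ n, p n ≠ 0)
    (hdisj : ∀ n m, z n ≠ p m)
    (hzfin : ∀ r : ℝ, {n : ℕ | ‖z n‖ < r}.Finite)
    (hpfin : ∀ r : ℝ, {n : ℕ | ‖p n‖ < r}.Finite)
    (hdiff : ∀ w : ℂ, w ∉ Set.range p → DifferentiableAt ℂ G w)
    (hzero_iff : ∀ w : ℂ, G w = 0 ↔ ∃ n, w = z n)
    (hzsimple : ∀ n, deriv G (z n) ≠ 0)
    (hres : ∀ n, ρ n ≠ 0 ∧ Tendsto (fun w => (w - p n) * G w) (𝓝[≠] p n) (𝓝 (ρ n)))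
    (hRpos : ∀ N, 0 < R N) (hRmono : StrictMono R) (hRtop : Tendsto R atTop atTop)
    (hRavoid : ∀ n N, ‖z n‖ ≠ R N ∧ ‖p n‖ ≠ R N)
    (hC : 0 < C)
    (hbound : ∀ N, ∀ w : ℂ, ‖w‖ = R N →
      ‖deriv G w / G w‖ ≤ C / R N) :
    (∀ N, |((hzfin (R N)).toFinset.card : ℝ) - ((hpfin (R N)).toFinset.card : ℝ)| ≤ C) ∧
    Filter.liminf (fun r : ℝ =>
      |((hzfin r).toFinset.card : ℝ) - ((hpfin r).toFinset.card : ℝ)|) atTop ≤ C := by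
  classical
  have main : ∀ N,
      |((hzfin (R N)).toFinset.card : ℝ) - ((hpfin (R N)).toFinset.card : ℝ)| ≤ C := by
    intro N
    set r := R N with hrdef
    have hr : 0 < r := hRpos N
    set Z : Finset ℂ := (hzfin r).toFinset.image z with hZdef
    set P : Finset ℂ := (hpfin r).toFinset.image p with hPdef
    have hZmem : ∀ a, a ∈ Z ↔ ∃ n, ‖z n‖ < r ∧ z n = a := by
      intro a
      simp only [hZdef, Finset.mem_image, Set.Finite.mem_toFinset, Set.mem_setOf_eq]
    have hPmem : ∀ a, a ∈ P ↔ ∃ n, ‖p n‖ < r ∧ p n = a := by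
      intro a
      simp only [hPdef, Finset.mem_image, Set.Finite.mem_toFinset, Set.mem_setOf_eq]
    have hnotrange : ∀ w : ℂ, ‖w‖ ≤ r → w ∉ (P : Set ℂ) → w ∉ Set.range p := by
      rintro w hwr hwP ⟨m, rfl⟩
      refine hwP (Finset.mem_coe.2 ((hPmem _).2 ⟨m, ?_, rfl⟩))
      exact lt_of_le_of_ne hwr (hRavoid m N).2
    have key := aux_key G Z P r C hr
      (by rintro a ha; obtain ⟨n, hn, rfl⟩ := (hZmem a).1 ha; exact hn)
      (by rintro a ha; obtain ⟨n, hn, rfl⟩ := (hPmem a).1 ha; exact hn)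
      (by rintro a haZ haP
          obtain ⟨n, _, rfl⟩ := (hZmem a).1 haZ
          obtain ⟨m, _, hmn⟩ := (hPmem _).1 haP
          exact hdisj n m hmn.symm)
      (by intro w hwr hwP
          exact Complex.analyticAt_iff_eventually_differentiableAt.2
            ((aux_nhds_not_range hpfin (hnotrange w hwr hwP)).mono fun u hu => hdiff u hu))
      (by intro w hwr
          rw [hzero_iff w]
          constructor
          · rintro ⟨n, rfl⟩
            refine (hZmem _).2 ⟨n, ?_, rfl⟩
            exact lt_of_le_of_ne hwr (hRavoid n N).1
          · intro hw
            obtain ⟨n, _, rfl⟩ := (hZmem w).1 hw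
            exact ⟨n, rfl⟩)
      (by rintro a haZ
          obtain ⟨n, _, rfl⟩ := (hZmem a).1 haZ
          exact hzsimple n)
      (by rintro a haP
          obtain ⟨m, _, rfl⟩ := (hPmem a).1 haP
          exact ⟨ρ m, (hres m).1, (hres m).2⟩)
      (fun w hw => hbound N w hw)
    have hZcard : Z.card = (hzfin r).toFinset.card :=
      Finset.card_image_of_injective _ hz_inj
    have hPcard : P.card = (hpfin r).toFinset.card :=
      Finset.card_image_of_injective _ hp_inj
    rwa [hZcard, hPcard] at key
  refine ⟨main, ?_⟩
  have hfreq : ∃ᶠ s in (atTop : Filter ℝ),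
      |((hzfin s).toFinset.card : ℝ) - ((hpfin s).toFinset.card : ℝ)| ≤ C := by
    have h2 : ∃ᶠ n in (atTop : Filter ℕ),
        |((hzfin (R n)).toFinset.card : ℝ) - ((hpfin (R n)).toFinset.card : ℝ)| ≤ C :=
      (Eventually.of_forall main).frequently
    exact (Filter.frequently_map.2 h2).filter_mono hRtop
  exact Filter.liminf_le_of_frequently_le hfreq
    (Filter.isBoundedUnder_of ⟨0, fun s => abs_nonneg _⟩)
end

section
/- (Residues from the thermal product formula.) Let P : ℂ → ℂ be the locally uniform limit on ℂ of the partial products ∏_{m < N} (1 − ω²/p_m²). Fix an index n, and assume the family (1 − p_n²/p_m²)_{m ≠ n} is multipliable with infinite product Π_n ≠ 0. Then (ω − p_n)·μ·sinh(βω/2)/P(ω) → −μ·p_n·sinh(β p_n/2)/(2·Π_n) as ω → p_n with ω ≠ p_n; i.e. the function ρ(ω) = μ·sinh(βω/2)/P(ω) has residue −μ·p_n·sinh(β p_n/2)/(2·∏_{m ≠ n}(1 − p_n²/p_m²)) at p_n. -/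
open Complex Filter Topology

/-- Residues from the thermal product formula: the spectral function
`ρ(ω) = μ sinh(βω/2) / P(ω)` has residue
`−μ p_n sinh(β p_n / 2) / (2 ∏_{m ≠ n} (1 − p_n²/p_m²))` at the pole `p_n`. -/
theorem stmt_8
    (β : ℝ) (hβ : 0 < β) (μ : ℂ) (p : ℕ → ℂ)
    (hp0 : ∀ m, p m ≠ 0)
    (hp2 : ∀ m m', m ≠ m' → (p m) ^ 2 ≠ (p m') ^ 2)
    (P : ℂ → ℂ)
    (hP : TendstoLocallyUniformly
      (fun N ω => ∏ m ∈ Finset.range N, (1 - ω ^ 2 / (p m) ^ 2)) P atTop)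
    (n : ℕ)
    (hmul : Multipliable (fun m : {m : ℕ // m ≠ n} => 1 - (p n) ^ 2 / (p m) ^ 2))
    (hPi : (∏' m : {m : ℕ // m ≠ n}, (1 - (p n) ^ 2 / (p m) ^ 2)) ≠ 0) :
    Tendsto (fun ω => (ω - p n) * (μ * Complex.sinh ((β : ℂ) * ω / 2) / P ω)) (𝓝[≠] p n)
      (𝓝 (-μ * p n * Complex.sinh ((β : ℂ) * p n / 2) /
        (2 * ∏' m : {m : ℕ // m ≠ n}, (1 - (p n) ^ 2 / (p m) ^ 2)))) := by
  set Pi0 : ℂ := ∏' m : {m : ℕ // m ≠ n}, (1 - (p n) ^ 2 / (p m) ^ 2) with hPi0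
  have hpn := hp0 n
  -- each partial product is differentiable
  have hdiff : ∀ N : ℕ, Differentiable ℂ (fun ω : ℂ => ∏ m ∈ Finset.range N, (1 - ω ^ 2 / (p m) ^ 2)) := by
    intro N
    apply Differentiable.fun_finsetProd
    intro m _
    exact (differentiable_const (1 : ℂ)).sub ((differentiable_pow 2).div_const _)
  have hP' : TendstoLocallyUniformlyOn
      (fun N ω => ∏ m ∈ Finset.range N, (1 - ω ^ 2 / (p m) ^ 2)) P atTop Set.univ :=
    (tendstoLocallyUniformlyOn_univ).2 hP
  -- P vanishes at p n
  have hP0 : P (p n) = 0 := by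
    have h1 : Tendsto (fun N => ∏ m ∈ Finset.range N, (1 - (p n) ^ 2 / (p m) ^ 2)) atTop (𝓝 (P (p n))) :=
      hP.tendstoLocallyUniformlyOn.tendsto_at (Set.mem_univ _)
    have h2 : Tendsto (fun N : ℕ => (0 : ℂ)) atTop (𝓝 (P (p n))) := by
      refine h1.congr' ?_
      filter_upwards [eventually_gt_atTop n] with N hN
      exact (Finset.prod_eq_zero (f := fun m => 1 - (p n) ^ 2 / (p m) ^ 2)
        (Finset.mem_range.2 hN)
        (by simp [div_self (pow_ne_zero 2 hpn)]))
    exact tendsto_nhds_unique h2 tendsto_const_nhds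
  -- convergence of the products with the n-th factor removed, at p n
  have hHP : HasProd (Set.mulIndicator {n}ᶜ (fun m => 1 - (p n) ^ 2 / (p m) ^ 2)) Pi0 := by
    rw [← hasProd_subtype_iff_mulIndicator]
    exact hmul.hasProd
  have hg : Tendsto (fun N => ∏ m ∈ (Finset.range N).erase n, (1 - (p n) ^ 2 / (p m) ^ 2))
      atTop (𝓝 Pi0) := by
    refine hHP.tendsto_prod_nat.congr' ?_
    filter_upwards [eventually_gt_atTop n] with N hN
    rw [← Finset.mul_prod_erase _ _ (Finset.mem_range.2 hN)]
    rw [Set.mulIndicator_of_notMem (by simp)]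
    rw [one_mul]
    exact Finset.prod_congr rfl fun m hm =>
      Set.mulIndicator_of_mem (by simpa using Finset.ne_of_mem_erase hm) _
  -- derivative of the partial products at p n
  have hdN : ∀ N, n < N → deriv (fun ω : ℂ => ∏ m ∈ Finset.range N, (1 - ω ^ 2 / (p m) ^ 2)) (p n)
      = (-2 / p n) * ∏ m ∈ (Finset.range N).erase n, (1 - (p n) ^ 2 / (p m) ^ 2) := by
    intro N hN
    have heq : (fun ω : ℂ => ∏ m ∈ Finset.range N, (1 - ω ^ 2 / (p m) ^ 2))
        = fun ω => (1 - ω ^ 2 / (p n) ^ 2) * ∏ m ∈ (Finset.range N).erase n, (1 - ω ^ 2 / (p m) ^ 2) := by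
      funext ω
      exact (Finset.mul_prod_erase _ _ (Finset.mem_range.2 hN)).symm
    rw [heq]
    have h1 : HasDerivAt (fun ω : ℂ => 1 - ω ^ 2 / (p n) ^ 2) (-(2 * p n / (p n) ^ 2)) (p n) := by
      have := ((hasDerivAt_pow 2 (p n)).div_const ((p n) ^ 2)).const_sub 1
      simpa using this
    have h2 : DifferentiableAt ℂ (fun ω : ℂ => ∏ m ∈ (Finset.range N).erase n, (1 - ω ^ 2 / (p m) ^ 2)) (p n) := by
      apply DifferentiableAt.fun_finsetProd
      intro m _
      exact (differentiableAt_const (1 : ℂ)).sub ((differentiableAt_pow 2).div_const _)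
    have h3 := h1.fun_mul h2.hasDerivAt
    rw [h3.deriv]
    have : (1 : ℂ) - (p n) ^ 2 / (p n) ^ 2 = 0 := by field_simp; ring
    rw [this, zero_mul, add_zero]
    congr 1
    field_simp
  -- derivative of P at p n
  have hPdiff : DifferentiableAt ℂ P (p n) :=
    (hP'.differentiableOn (Eventually.of_forall fun N => (hdiff N).differentiableOn)
      isOpen_univ).differentiableAt (isOpen_univ.mem_nhds trivial)
  have hderivconv : Tendsto (fun N => deriv (fun ω : ℂ => ∏ m ∈ Finset.range N, (1 - ω ^ 2 / (p m) ^ 2)) (p n))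
      atTop (𝓝 (deriv P (p n))) :=
    (hP'.deriv (Eventually.of_forall fun N => (hdiff N).differentiableOn) isOpen_univ).tendsto_at
      (Set.mem_univ _)
  have hd : deriv P (p n) = (-2 / p n) * Pi0 := by
    refine tendsto_nhds_unique ?_ (hg.const_mul (-2 / p n))
    refine hderivconv.congr' ?_
    filter_upwards [eventually_gt_atTop n] with N hN
    exact hdN N hN
  have hd0 : deriv P (p n) ≠ 0 := by
    rw [hd]
    exact mul_ne_zero (div_ne_zero (by norm_num) hpn) hPi
  -- slope limit
  have hslope : Tendsto (fun ω => P ω / (ω - p n)) (𝓝[≠] p n) (𝓝 (deriv P (p n))) := by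
    have := hasDerivAt_iff_tendsto_slope.1 hPdiff.hasDerivAt
    refine this.congr fun ω => ?_
    simp [slope_def_field, hP0, div_eq_inv_mul]
  have hinv : Tendsto (fun ω => (ω - p n) / P ω) (𝓝[≠] p n) (𝓝 (deriv P (p n))⁻¹) := by
    have := hslope.inv₀ hd0
    refine this.congr fun ω => ?_
    rw [inv_div]
  have hsinh : Tendsto (fun ω => μ * Complex.sinh ((β : ℂ) * ω / 2)) (𝓝[≠] p n)
      (𝓝 (μ * Complex.sinh ((β : ℂ) * p n / 2))) := by
    apply Tendsto.mono_left _ nhdsWithin_le_nhds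
    exact (Continuous.tendsto (by continuity) (p n))
  have hfin := hsinh.mul hinv
  have hval : μ * Complex.sinh ((β : ℂ) * p n / 2) * (deriv P (p n))⁻¹
      = -μ * p n * Complex.sinh ((β : ℂ) * p n / 2) / (2 * Pi0) := by
    rw [hd]; field_simp
  rw [← hval]
  exact hfin.congr fun ω => by ring
end

section
/- (BTZ spectrum from Gamma functions.) Let β > 0 and k be real and 0 < ν < 1, and let Γ denote the complex Gamma function (with the convention Γ(s) = 0 exactly when s is a nonpositive integer). Then for ω ∈ ℂ, the product Γ((1+ν)/2 + iβ(k−ω)/(4π)) · Γ((1+ν)/2 − iβ(k+ω)/(4π)) vanishes if and only if there exists a natural number m ≥ 1 such that ω = k − (2πi/β)(2m+ν−1) or ω = −k − (2πi/β)(2m+ν−1); i.e. the Gamma-factor singularities of the BTZ scalar correlator occur exactly at the quasinormal frequencies ±k − (2πi/β)(2m+ν−1), m ≥ 1. -/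
open Complex Filter Topology

/-- BTZ spectrum from Gamma functions: the product of the two Gamma factors of the BTZ
scalar correlator vanishes exactly at the quasinormal frequencies
`±k − (2πi/β)(2m+ν−1)`, `m ≥ 1`. -/
theorem stmt_16 (β k ν : ℝ) (hβ : 0 < β) (hν : 0 < ν) (hν1 : ν < 1) (ω : ℂ) :
    Complex.Gamma ((1 + (ν : ℂ)) / 2 + Complex.I * (β : ℂ) * ((k : ℂ) - ω) / (4 * (Real.pi : ℂ))) *
      Complex.Gamma ((1 + (ν : ℂ)) / 2 - Complex.I * (β : ℂ) * ((k : ℂ) + ω) / (4 * (Real.pi : ℂ))) = 0 ↔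
    ∃ m : ℕ, 1 ≤ m ∧
      (ω = (k : ℂ) - (2 * (Real.pi : ℂ) * Complex.I / (β : ℂ)) * (2 * (m : ℂ) + (ν : ℂ) - 1) ∨
       ω = -(k : ℂ) - (2 * (Real.pi : ℂ) * Complex.I / (β : ℂ)) * (2 * (m : ℂ) + (ν : ℂ) - 1)) := by
  have hβ' : (β : ℂ) ≠ 0 := by exact_mod_cast hβ.ne'
  have hπ : (Real.pi : ℂ) ≠ 0 := by exact_mod_cast Real.pi_ne_zero
  have hI := Complex.I_ne_zero
  rw [mul_eq_zero, Complex.Gamma_eq_zero_iff, Complex.Gamma_eq_zero_iff]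
  constructor
  · rintro (⟨n, e⟩ | ⟨n, e⟩)
    · refine ⟨n + 1, le_add_self, Or.inl ?_⟩
      push_cast
      field_simp at e ⊢
      linear_combination (Complex.I / 2) * e + ((β:ℂ) * (ω - (k:ℂ))) * Complex.I_sq
    · refine ⟨n + 1, le_add_self, Or.inr ?_⟩
      push_cast
      field_simp at e ⊢
      linear_combination (Complex.I / 2) * e + ((β:ℂ) * ((k:ℂ) + ω)) * Complex.I_sq
  · rintro ⟨m, hm, (rfl | rfl)⟩
    · refine Or.inl ⟨m - 1, ?_⟩
      have : ((m - 1 : ℕ) : ℂ) = (m : ℂ) - 1 := by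
        push_cast [Nat.cast_sub hm]; ring
      rw [this]
      field_simp
      linear_combination (4 * (Real.pi:ℂ) * ((ν:ℂ) - 1 + 2 * (m:ℂ))) * Complex.I_sq
    · refine Or.inr ⟨m - 1, ?_⟩
      have : ((m - 1 : ℕ) : ℂ) = (m : ℂ) - 1 := by
        push_cast [Nat.cast_sub hm]; ring
      rw [this]
      field_simp
      linear_combination (4 * (Real.pi:ℂ) * ((ν:ℂ) - 1 + 2 * (m:ℂ))) * Complex.I_sq
end

section
/- (Elementary symmetric polynomial expansion of the spectral duality relation.) Let β > 0, λ ∈ ℂ, and for each N let W_N be a finite multiset of complex numbers, with S_N(ω) := ∏_{w ∈ W_N} (1 + w·ω). Suppose S_N converges locally uniformly on ℂ to a function S satisfying S(ω) − S(−ω) = 2iλ·sinh(βω/2) for all ω ∈ ℂ. Then for every natural number j, the odd elementary symmetric polynomials converge: e_{2j+1}(W_N) → (iλ/(2j+1)!)·(β/2)^{2j+1} as N → ∞. -/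
open Complex Filter Topology Polynomial

private lemma my_esymm_zero (s : Multiset ℂ) : s.esymm 0 = 1 := by
  simp [Multiset.esymm]

private lemma my_esymm_cons (a : ℂ) (s : Multiset ℂ) (k : ℕ) :
    (a ::ₘ s).esymm (k + 1) = s.esymm (k + 1) + a * s.esymm k := by
  rw [Multiset.esymm, Multiset.powersetCard_cons, Multiset.map_add, Multiset.sum_add,
    Multiset.map_map]
  congr 1
  rw [Multiset.esymm, ← Multiset.sum_map_mul_left]
  exact congrArg _ (Multiset.map_congr rfl fun t _ => by simp [Multiset.prod_cons])

private lemma my_coeff_prod (s : Multiset ℂ) (k : ℕ) :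
    ((s.map fun w => (1 + C w * X : ℂ[X])).prod).coeff k = s.esymm k := by
  induction s using Multiset.induction generalizing k with
  | empty =>
    cases k with
    | zero => simp [my_esymm_zero]
    | succ k => simp [Multiset.esymm, coeff_one, Multiset.powersetCard_zero_right]
  | cons a s ih =>
    rw [Multiset.map_cons, Multiset.prod_cons, add_mul, one_mul, mul_assoc, coeff_add,
      coeff_C_mul]
    cases k with
    | zero => simp [ih, my_esymm_zero]
    | succ k => rw [coeff_X_mul, ih, ih, my_esymm_cons]

private lemma my_eval (s : Multiset ℂ) (ω : ℂ) :
    ((s.map fun w => (1 + C w * X : ℂ[X])).prod).eval ω = (s.map fun w => 1 + w * ω).prod := by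
  rw [eval_multiset_prod, Multiset.map_map]
  exact congrArg _ (Multiset.map_congr rfl fun w _ => by simp)

private lemma my_iter_deriv (p : ℂ[X]) (k : ℕ) :
    deriv^[k] (fun x => p.eval x) = fun x => (derivative^[k] p).eval x := by
  induction k generalizing p with
  | zero => simp
  | succ k ih =>
    have h : deriv (fun x => p.eval x) = fun x => (derivative p).eval x :=
      funext fun x => Polynomial.deriv (p := p)
    rw [Function.iterate_succ_apply, h, ih, Function.iterate_succ_apply]

private lemma my_fun_eq (s : Multiset ℂ) :
    (fun ω => (s.map fun w => 1 + w * ω).prod)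
      = fun x => ((s.map fun w => (1 + C w * X : ℂ[X])).prod).eval x :=
  funext fun ω => (my_eval s ω).symm

private lemma my_deriv_zero (s : Multiset ℂ) (k : ℕ) :
    deriv^[k] (fun ω => (s.map fun w => 1 + w * ω).prod) 0
      = (k.factorial : ℂ) * s.esymm k := by
  rw [my_fun_eq, my_iter_deriv]
  beta_reduce
  rw [← Polynomial.coeff_zero_eq_eval_zero,
    Polynomial.coeff_iterate_derivative, zero_add, Nat.descFactorial_self,
    my_coeff_prod, nsmul_eq_mul]

private lemma my_sinh_iter (m : ℕ) : iteratedDeriv (2 * m + 1) Complex.sinh = Complex.cosh := by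
  induction m with
  | zero =>
    rw [show 2 * 0 + 1 = 1 by ring, iteratedDeriv_succ, iteratedDeriv_zero, Complex.deriv_sinh]
  | succ m ih =>
    rw [show 2 * (m + 1) + 1 = (2 * m + 1) + 1 + 1 by ring, iteratedDeriv_succ,
      iteratedDeriv_succ, ih, Complex.deriv_cosh, Complex.deriv_sinh]

/-- Elementary symmetric polynomial expansion of the spectral duality relation:
if `S_N(ω) = ∏_{w ∈ W_N} (1 + wω)` converges locally uniformly to `S` with
`S(ω) − S(−ω) = 2iλ sinh(βω/2)`, then the odd elementary symmetric polynomials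
of `W_N` converge to `(iλ/(2j+1)!)(β/2)^{2j+1}`. -/
theorem stmt_17
    (β : ℝ) (hβ : 0 < β) (lam : ℂ)
    (W : ℕ → Multiset ℂ) (S : ℂ → ℂ)
    (hconv : TendstoLocallyUniformly
      (fun N ω => ((W N).map (fun w => 1 + w * ω)).prod) S atTop)
    (hS : ∀ ω : ℂ, S ω - S (-ω) = 2 * Complex.I * lam * Complex.sinh ((β : ℂ) * ω / 2)) :
    ∀ j : ℕ, Tendsto (fun N => (W N).esymm (2 * j + 1)) atTop
      (𝓝 (Complex.I * lam / ((2 * j + 1).factorial : ℂ) * ((β : ℂ) / 2) ^ (2 * j + 1))) := by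
  intro j
  set k := 2 * j + 1 with hk
  set c : ℂ := (β : ℂ) / 2 with hc
  set F : ℕ → ℂ → ℂ := fun N ω => ((W N).map (fun w => 1 + w * ω)).prod with hF
  have hconv' : TendstoLocallyUniformlyOn F S atTop Set.univ :=
    tendstoLocallyUniformlyOn_univ.2 hconv
  have hFdiff : ∀ (N : ℕ) (m : ℕ), DifferentiableOn ℂ (deriv^[m] (F N)) Set.univ := by
    intro N m
    have h : F N = fun x => (((W N).map fun w => (1 + C w * X : ℂ[X])).prod).eval x :=
      my_fun_eq (W N)
    rw [h, my_iter_deriv]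
    exact (Polynomial.differentiable _).differentiableOn
  -- locally uniform convergence of all iterated derivatives
  have key : ∀ m : ℕ, TendstoLocallyUniformlyOn (fun N => deriv^[m] (F N)) (deriv^[m] S)
      atTop Set.univ := by
    intro m
    induction m with
    | zero => simpa using hconv'
    | succ m ih =>
      have h := ih.deriv (Eventually.of_forall fun N => hFdiff N m) isOpen_univ
      simp only [Function.iterate_succ_apply', Function.comp_def]
      exact h
  have hpt : Tendsto (fun N => deriv^[k] (F N) 0) atTop (𝓝 (deriv^[k] S 0)) :=
    (key k).tendsto_at (Set.mem_univ 0)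
  -- S is entire, hence smooth
  have hSdiff : DifferentiableOn ℂ S Set.univ :=
    hconv'.differentiableOn (Eventually.of_forall fun N => by simpa using hFdiff N 0) isOpen_univ
  have hScd : ContDiff ℂ k S := by
    have := (hSdiff.analyticOnNhd isOpen_univ).contDiffOn (n := k) uniqueDiffOn_univ
    exact contDiffOn_univ.mp this
  -- compute the k-th derivative of the RHS at 0
  have hT : iteratedDeriv k (fun ω => 2 * Complex.I * lam * Complex.sinh ((β : ℂ) * ω / 2)) 0
      = 2 * Complex.I * lam * c ^ k := by
    have harg : (fun ω : ℂ => 2 * Complex.I * lam * Complex.sinh ((β : ℂ) * ω / 2))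
        = fun ω => 2 * Complex.I * lam * Complex.sinh (c * ω) := by
      funext ω; rw [show (β : ℂ) * ω / 2 = c * ω by rw [hc]; ring]
    rw [harg]
    have h1 : ContDiffOn ℂ k (fun ω : ℂ => Complex.sinh (c * ω)) Set.univ :=
      (Complex.contDiff_sinh.comp (contDiff_const.mul contDiff_id)).contDiffOn
    rw [← iteratedDerivWithin_univ,
      iteratedDerivWithin_const_mul (Set.mem_univ (0:ℂ)) uniqueDiffOn_univ _ (h1 0 (Set.mem_univ _)),
      iteratedDerivWithin_univ, iteratedDeriv_comp_const_mul Complex.contDiff_sinh c,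
      hk, my_sinh_iter j]
    simp
  -- compute iteratedDeriv k S 0
  have hSodd : iteratedDeriv k S 0 = Complex.I * lam * c ^ k := by
    have hg : (S - fun ω => S (-ω))
        = fun ω => 2 * Complex.I * lam * Complex.sinh ((β : ℂ) * ω / 2) :=
      funext fun ω => hS ω
    have hcdneg : ContDiff ℂ k (fun ω : ℂ => S (-ω)) := hScd.comp contDiff_neg
    have e1 : iteratedDeriv k (S - fun ω => S (-ω)) 0
        = iteratedDeriv k S 0 - iteratedDeriv k (fun ω => S (-ω)) 0 := by
      rw [← iteratedDerivWithin_univ, ← iteratedDerivWithin_univ, ← iteratedDerivWithin_univ,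
        iteratedDerivWithin_sub (Set.mem_univ (0:ℂ)) uniqueDiffOn_univ
          hScd.contDiffAt.contDiffWithinAt hcdneg.contDiffAt.contDiffWithinAt]
    have e2 : iteratedDeriv k (fun ω => S (-ω)) 0 = -iteratedDeriv k S 0 := by
      rw [iteratedDeriv_comp_neg, hk]
      simp [pow_succ, pow_mul]
    have e3 := hg ▸ e1
    rw [hT, e2] at e3
    have : 2 * iteratedDeriv k S 0 = 2 * Complex.I * lam * c ^ k := by
      linear_combination -e3
    linear_combination this / 2
  -- conclude
  have hpt' : Tendsto (fun N => (k.factorial : ℂ) * (W N).esymm k) atTop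
      (𝓝 (Complex.I * lam * c ^ k)) := by
    have : (fun N => deriv^[k] (F N) 0) = fun N => (k.factorial : ℂ) * (W N).esymm k :=
      funext fun N => my_deriv_zero (W N) k
    rw [this] at hpt
    rw [← iteratedDeriv_eq_iterate, hSodd] at hpt
    exact hpt
  have hfac : ((k.factorial : ℂ)) ≠ 0 := by
    exact_mod_cast Nat.factorial_ne_zero k
  have h2 := hpt'.const_mul ((k.factorial : ℂ))⁻¹
  convert h2 using 2 with N
  all_goals (field_simp; try ring)
end

section
/- (Digamma summation identity.) Let d, ξ, ω ∈ ℂ with d ≠ 0, set a := 1 + ξ − ω/d and b := 1 + ξ + ω/d, and assume neither a nor b is a nonpositive integer (equivalently, ω ≠ ±d(m+ξ) for every integer m ≥ 1, and each of a, b avoids {0, −1, −2, …}). Then the series ∑_{m=1}^{∞} [1/(ω − d(m+ξ)) + 1/(ω + d(m+ξ))] converges, and its sum equals (ψ(a) − ψ(b))/d, where ψ(s) := Γ'(s)/Γ(s) is the logarithmic derivative of the complex Gamma function. -/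
open Complex Filter Topology

/-- The digamma function `ψ(s) = Γ'(s)/Γ(s)`. -/
noncomputable def digamma (s : ℂ) : ℂ := deriv Complex.Gamma s / Complex.Gamma s


lemma shift_ne {s : ℂ} (hs : ∀ m : ℕ, s ≠ -m) (n : ℕ) : ∀ m : ℕ, s + n ≠ -m := by
  intro m h
  apply hs (m + n)
  push_cast
  linear_combination h

lemma digamma_add_one {s : ℂ} (hs : ∀ m : ℕ, s ≠ -m) :
    _root_.digamma (s + 1) = _root_.digamma s + 1 / s := by
  have hs0 : s ≠ 0 := by simpa using hs 0
  have hds : DifferentiableAt ℂ Complex.Gamma s := Complex.differentiableAt_Gamma s hs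
  have hs1 : ∀ m : ℕ, s + 1 ≠ -m := by simpa using shift_ne hs 1
  have hds1 : DifferentiableAt ℂ Complex.Gamma (s + 1) := Complex.differentiableAt_Gamma _ hs1
  have h1 : HasDerivAt (fun z : ℂ => Complex.Gamma (z + 1)) (deriv Complex.Gamma (s + 1)) s := by
    have := HasDerivAt.comp s hds1.hasDerivAt ((hasDerivAt_id s).add_const 1); rw [mul_one] at this; exact this
  have h2 : HasDerivAt (fun z : ℂ => z * Complex.Gamma z)
      (1 * Complex.Gamma s + s * deriv Complex.Gamma s) s :=
    (hasDerivAt_id s).mul hds.hasDerivAt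
  have heq : (fun z : ℂ => Complex.Gamma (z + 1)) =ᶠ[nhds s] fun z : ℂ => z * Complex.Gamma z := by
    filter_upwards [isOpen_ne.mem_nhds hs0] with z hz
    exact Complex.Gamma_add_one z hz
  have h3 : deriv Complex.Gamma (s + 1) = Complex.Gamma s + s * deriv Complex.Gamma s := by
    have := (h2.congr_of_eventuallyEq heq).unique h1
    linear_combination -this
  have hG : Complex.Gamma s ≠ 0 := Complex.Gamma_ne_zero hs
  rw [_root_.digamma, _root_.digamma, h3, Complex.Gamma_add_one s hs0]
  field_simp
  ring

lemma digamma_add_nat {s : ℂ} (hs : ∀ m : ℕ, s ≠ -m) (n : ℕ) :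
    _root_.digamma (s + n) = _root_.digamma s + ∑ j ∈ Finset.range n, 1 / (s + j) := by
  induction n with
  | zero => simp
  | succ n ih =>
    have : s + (n + 1 : ℕ) = (s + n) + 1 := by push_cast; ring
    rw [this, digamma_add_one (shift_ne hs n), ih, Finset.sum_range_succ, add_assoc]



/-- real digamma -/
noncomputable def rpsi (x : ℝ) : ℝ := deriv Real.Gamma x / Real.Gamma x

lemma real_ne_neg_nat {x : ℝ} (hx : 0 < x) : ∀ m : ℕ, (x : ℂ) ≠ -m := by
  intro m h
  have : x = -(m : ℝ) := by exact_mod_cast h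
  have : (0:ℝ) ≤ (m:ℝ) := m.cast_nonneg
  linarith [hx.trans_eq ‹x = -(m:ℝ)›]

lemma real_ne_neg_nat' {x : ℝ} (hx : 0 < x) : ∀ m : ℕ, x ≠ -(m : ℝ) := by
  intro m h
  have : (0:ℝ) ≤ (m:ℝ) := m.cast_nonneg
  linarith

lemma deriv_complex_Gamma_ofReal {x : ℝ} (hx : 0 < x) :
    deriv Complex.Gamma (x : ℂ) = ((deriv Real.Gamma x : ℝ) : ℂ) := by
  have hc : DifferentiableAt ℂ Complex.Gamma (x : ℂ) :=
    Complex.differentiableAt_Gamma _ (real_ne_neg_nat hx)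
  have hr : HasDerivAt Real.Gamma (deriv Real.Gamma x) x :=
    (Real.differentiableAt_Gamma (real_ne_neg_nat' hx)).hasDerivAt
  have h1 : HasDerivAt (fun t : ℝ => Complex.Gamma (t : ℂ)) (deriv Complex.Gamma (x : ℂ)) x :=
    hc.hasDerivAt.comp_ofReal
  have h2 : HasDerivAt (fun t : ℝ => ((Real.Gamma t : ℂ))) (((deriv Real.Gamma x : ℝ) : ℂ)) x :=
    hr.ofReal_comp
  have heq : (fun t : ℝ => Complex.Gamma (t : ℂ)) = fun t : ℝ => ((Real.Gamma t : ℂ)) := by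
    funext t; exact Complex.Gamma_ofReal t
  rw [heq] at h1
  exact h1.unique h2

lemma digamma_ofReal {x : ℝ} (hx : 0 < x) : _root_.digamma (x : ℂ) = (rpsi x : ℂ) := by
  rw [_root_.digamma, rpsi, deriv_complex_Gamma_ofReal hx, Complex.Gamma_ofReal]
  push_cast
  rfl

lemma rpsi_eq_deriv_log {x : ℝ} (hx : 0 < x) :
    rpsi x = deriv (Real.log ∘ Real.Gamma) x := by
  rw [Function.comp_def, deriv.log (Real.differentiableAt_Gamma (real_ne_neg_nat' hx))
    (Real.Gamma_pos_of_pos hx).ne', rpsi]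

lemma rpsi_mono {x y : ℝ} (hx : 0 < x) (hxy : x ≤ y) : rpsi x ≤ rpsi y := by
  have hy : 0 < y := hx.trans_le hxy
  rw [rpsi_eq_deriv_log hx, rpsi_eq_deriv_log hy]
  refine Real.convexOn_log_Gamma.monotoneOn_deriv (fun t ht => ?_) hx hy hxy
  exact (Real.differentiableAt_Gamma (real_ne_neg_nat' ht)).log
    (Real.Gamma_pos_of_pos ht).ne'

lemma rpsi_add_nat {x : ℝ} (hx : 0 < x) (n : ℕ) :
    rpsi (x + n) = rpsi x + ∑ j ∈ Finset.range n, 1 / (x + j) := by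
  induction n with
  | zero => simp
  | succ n ih =>
    have h1 : x + ((n:ℝ) + 1) = (x + n) + 1 := by ring
    have h2 : rpsi ((x + n) + 1) = rpsi (x + n) + 1 / (x + n) := by
      have hpos : (0:ℝ) < x + n := by positivity
      have := digamma_add_one (s := ((x + n : ℝ) : ℂ)) (real_ne_neg_nat hpos)
      have hcast : ((x + n : ℝ) : ℂ) + 1 = ((x + n + 1 : ℝ) : ℂ) := by push_cast; ring
      rw [hcast, digamma_ofReal (by positivity), digamma_ofReal hpos] at this
      have : ((rpsi (x + n + 1) : ℝ) : ℂ) = ((rpsi (x + n) + 1 / (x + n) : ℝ) : ℂ) := by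
        rw [this]; push_cast; ring
      exact_mod_cast this
    push_cast
    rw [h1, h2, ih, Finset.sum_range_succ, add_assoc]



lemma rpsi_diff_tendsto {a b : ℝ} (ha : 0 < a) (hb : 0 < b) :
    Tendsto (fun N : ℕ => rpsi (a + N) - rpsi (b + N)) atTop (𝓝 0) := by
  set c := min a b with hc
  have hc0 : 0 < c := lt_min ha hb
  set k : ℕ := ⌈|a - b|⌉₊ + 1 with hk
  have habk : max a b ≤ c + k := by
    have h1 : |a - b| ≤ (k : ℝ) := by
      push_cast
      exact (Nat.le_ceil _).trans (by rw [hk]; push_cast; linarith)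
    rcases le_total a b with h | h
    · simp only [hc, max_eq_right h, min_eq_left h]
      rw [abs_sub_comm, _root_.abs_of_nonneg (by linarith : (0:ℝ) ≤ b - a)] at h1; linarith
    · simp only [hc, max_eq_left h, min_eq_right h]
      rw [_root_.abs_of_nonneg (by linarith : (0:ℝ) ≤ a - b)] at h1; linarith
  have key : ∀ N : ℕ, |rpsi (a + N) - rpsi (b + N)| ≤ (k : ℝ) / (c + N) := by
    intro N
    have hcN : 0 < c + (N : ℝ) := by positivity
    have hlow : ∀ x : ℝ, 0 < x → c ≤ x → x ≤ c + k →
        rpsi (c + N) ≤ rpsi (x + N) ∧ rpsi (x + N) ≤ rpsi (c + N + k) := by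
      intro x hx h1 h2
      constructor
      · exact rpsi_mono hcN (by linarith)
      · exact rpsi_mono (by positivity) (by linarith)
    have hA := hlow a ha (min_le_left _ _) ((le_max_left a b).trans habk)
    have hB := hlow b hb (min_le_right _ _) ((le_max_right a b).trans habk)
    have hsum : rpsi (c + N + k) - rpsi (c + N) ≤ (k : ℝ) / (c + N) := by
      rw [rpsi_add_nat hcN k, add_sub_cancel_left]
      calc ∑ j ∈ Finset.range k, 1 / (c + N + j)
          ≤ ∑ j ∈ Finset.range k, 1 / (c + N) := by
            refine Finset.sum_le_sum fun j _ => ?_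
            apply one_div_le_one_div_of_le hcN
            have : (0:ℝ) ≤ (j:ℝ) := j.cast_nonneg
            linarith
        _ = (k : ℝ) / (c + N) := by
            rw [Finset.sum_const, Finset.card_range, nsmul_eq_mul, mul_one_div]
    rw [abs_sub_le_iff]
    constructor <;> linarith [hA.1, hA.2, hB.1, hB.2]
  refine squeeze_zero_norm key ?_
  have h1 : Tendsto (fun N : ℕ => c + (N : ℝ)) atTop atTop :=
    tendsto_atTop_add_const_left _ c tendsto_natCast_atTop_atTop
  simpa [div_eq_mul_inv] using h1.inv_tendsto_atTop.const_mul (k : ℝ)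


def Upoles : Set ℂ := {z : ℂ | ∀ m : ℕ, z ≠ -(m : ℂ)}

lemma norm_add_nat_ge (a : ℂ) (j : ℕ) : (j : ℝ) - ‖a‖ ≤ ‖a + j‖ := by
  have h := norm_sub_norm_le ((j : ℂ)) (-a)
  rw [sub_neg_eq_add, norm_neg, norm_natCast, add_comm] at h
  linarith

lemma summable_aux {a b : ℂ} (ha : ∀ m : ℕ, a ≠ -m) (hb : ∀ m : ℕ, b ≠ -m) :
    Summable (fun j : ℕ => 1 / (b + j) - 1 / (a + j)) := by
  have hane : ∀ j : ℕ, a + j ≠ 0 := by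
    intro j h; exact ha j (by linear_combination h)
  have hbne : ∀ j : ℕ, b + j ≠ 0 := by
    intro j h; exact hb j (by linear_combination h)
  have heq : (fun j : ℕ => 1 / (b + j) - 1 / (a + j)) =
      fun j : ℕ => (a - b) * (1 / ((a + j) * (b + j))) := by
    funext j
    rw [div_sub_div _ _ (hbne j) (hane j), mul_one_div,
      show (1:ℂ) * (a + j) - (b + j) * 1 = a - b by ring, mul_comm (b + j)]
  rw [heq]
  apply Summable.mul_left
  have hs : Summable (fun j : ℕ => 4 / (j : ℝ) ^ 2) :=
    (Real.summable_one_div_nat_pow.mpr one_lt_two).mul_left 4 |>.congr (by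
      intro j; rw [mul_one_div])
  refine Summable.of_norm_bounded_eventually_nat (g := fun j : ℕ => 4 / (j : ℝ) ^ 2) hs ?_
  filter_upwards [eventually_ge_atTop (⌈2 * ‖a‖ + 2 * ‖b‖ + 2⌉₊)] with j hj
  have hj' : 2 * ‖a‖ + 2 * ‖b‖ + 2 ≤ (j : ℝ) := (Nat.ceil_le.mp (le_refl _)).trans
    (by exact_mod_cast Nat.cast_le.mpr hj)
  have hja : (j : ℝ) / 2 ≤ ‖a + j‖ := by
    have := norm_add_nat_ge a j
    have h0 : (0:ℝ) ≤ ‖b‖ := norm_nonneg b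
    linarith
  have hjb : (j : ℝ) / 2 ≤ ‖b + j‖ := by
    have := norm_add_nat_ge b j
    have h0 : (0:ℝ) ≤ ‖a‖ := norm_nonneg a
    linarith
  have hjpos : (0:ℝ) < (j : ℝ) := by
    have h0 : (0:ℝ) ≤ ‖a‖ := norm_nonneg a
    have h1 : (0:ℝ) ≤ ‖b‖ := norm_nonneg b
    linarith
  rw [norm_div, norm_one]
  rw [div_le_div_iff₀ (norm_pos_iff.mpr (mul_ne_zero (hane j) (hbne j))) (by positivity : (0:ℝ) < (j:ℝ)^2)]
  have : (j:ℝ)/2 * ((j:ℝ)/2) ≤ ‖(a + j) * (b + j)‖ := by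
    rw [norm_mul]
    exact mul_le_mul hja hjb (by positivity) (norm_nonneg _)
  nlinarith [norm_nonneg ((a + (j:ℂ)) * (b + j))]

lemma isClosedEmbedding_intCast_complex : Topology.IsClosedEmbedding ((Int.cast : ℤ → ℂ)) := by
  have h1 := Complex.isUniformEmbedding_ofReal.isClosedEmbedding
  have h2 := Int.isClosedEmbedding_coe_real
  have h3 := h1.comp h2
  have h4 : (Int.cast : ℤ → ℂ) = (fun n : ℤ => ((n : ℝ) : ℂ)) := by
    funext n; simp
  rw [h4]
  exact h3

lemma Upoles_eq_compl : Upoles = ((Int.cast : ℤ → ℂ) '' (Set.Iic 0))ᶜ := by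
  ext z
  simp only [Upoles, Set.mem_setOf_eq, Set.mem_compl_iff, Set.mem_image, Set.mem_Iic, not_exists]
  constructor
  · rintro h n ⟨hn1, hn2⟩
    refine h (-n).toNat ?_
    have ht : (((-n).toNat : ℤ)) = -n := Int.toNat_of_nonneg (by linarith)
    rw [← hn2, show -((((-n).toNat : ℕ)) : ℂ) = -((((-n).toNat : ℤ) : ℂ)) by push_cast; ring, ht]
    push_cast
    ring
  · intro h m hm
    exact h (-(m : ℤ)) ⟨by simp, by rw [hm]; push_cast; ring⟩

lemma isOpen_Upoles : IsOpen Upoles := by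
  rw [Upoles_eq_compl]
  exact (isClosedEmbedding_intCast_complex.isClosedMap _ (isClosed_discrete _)).isOpen_compl

lemma isPreconnected_Upoles : IsPreconnected Upoles := by
  have h1 : Upoles = (Set.range fun m : ℕ => -(m : ℂ))ᶜ := by
    ext z
    simp [Upoles, Set.mem_range, not_exists, eq_comm, ne_comm]
  rw [h1]
  refine (Set.Countable.isConnected_compl_of_one_lt_rank ?_ (Set.countable_range _)).isPreconnected
  rw [rank_real_complex]
  norm_num

lemma analyticOnNhd_digamma : AnalyticOnNhd ℂ _root_.digamma Upoles := by
  have hg : AnalyticOnNhd ℂ Complex.Gamma Upoles := by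
    refine DifferentiableOn.analyticOnNhd (fun z hz => ?_) isOpen_Upoles
    exact (Complex.differentiableAt_Gamma z hz).differentiableWithinAt
  exact (hg.deriv).div hg (fun z hz => Complex.Gamma_ne_zero hz)

lemma analyticAt_T {b : ℂ} (hb : ∀ m : ℕ, b ≠ -m) {z₀ : ℂ} (hz₀ : z₀ ∈ Upoles) :
    AnalyticAt ℂ (fun z : ℂ => ∑' j : ℕ, (1 / (b + j) - 1 / (z + j))) z₀ := by
  obtain ⟨r, hr0, hrU⟩ : ∃ r > 0, Metric.closedBall z₀ r ⊆ Upoles :=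
    (Metric.nhds_basis_closedBall.mem_iff).mp (isOpen_Upoles.mem_nhds hz₀)
  set V := Metric.ball z₀ r with hV
  have hVU : V ⊆ Upoles := fun z hz => hrU (Metric.ball_subset_closedBall hz)
  set J : ℕ := ⌈2 * ‖z₀‖ + 2 * r + 2 * ‖b‖ + 2⌉₊ with hJ
  have hJge : 2 * ‖z₀‖ + 2 * r + 2 * ‖b‖ + 2 ≤ (J : ℝ) := Nat.le_ceil _
  set C : ℝ := ‖z₀‖ + r + ‖b‖ with hC
  -- bounds for the tail terms on V
  have htail : ∀ (j : ℕ) (z : ℂ), z ∈ V →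
      ‖1 / (b + (j + J : ℕ)) - 1 / (z + (j + J : ℕ))‖ ≤ 4 * C / ((j + J : ℕ) : ℝ) ^ 2 := by
    intro j z hz
    have hzb : ‖z‖ ≤ ‖z₀‖ + r := by
      have := mem_ball_iff_norm.mp hz
      have := norm_sub_norm_le z z₀
      linarith [le_of_lt (mem_ball_iff_norm.mp hz)]
    have hn : (J : ℝ) ≤ ((j + J : ℕ) : ℝ) := by push_cast; linarith [Nat.cast_nonneg (α := ℝ) j]
    have hC0 : 0 < C := by positivity
    have hn0 : (0:ℝ) ≤ ‖z₀‖ := norm_nonneg _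
    have hb0 : (0:ℝ) ≤ ‖b‖ := norm_nonneg _
    have hr0' : (0:ℝ) ≤ r := hr0.le
    have hb2 : ((j + J : ℕ) : ℝ) / 2 ≤ ‖b + (j + J : ℕ)‖ := by
      have := norm_add_nat_ge b (j + J)
      linarith
    have hz2 : ((j + J : ℕ) : ℝ) / 2 ≤ ‖z + (j + J : ℕ)‖ := by
      have := norm_add_nat_ge z (j + J)
      linarith
    have hjpos : (0:ℝ) < ((j + J : ℕ) : ℝ) := by
      have h1 : (0:ℝ) ≤ ‖z₀‖ := norm_nonneg _
      have h2 : (0:ℝ) ≤ ‖b‖ := norm_nonneg _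
      linarith
    have hbne : b + ((j + J : ℕ) : ℂ) ≠ 0 := by
      intro h
      rw [h, norm_zero] at hb2
      linarith
    have hzne : z + ((j + J : ℕ) : ℂ) ≠ 0 := by
      intro h
      rw [h, norm_zero] at hz2
      linarith
    have heq : 1 / (b + ((j + J : ℕ) : ℂ)) - 1 / (z + ((j + J : ℕ) : ℂ)) =
        (z - b) / ((z + ((j + J : ℕ) : ℂ)) * (b + ((j + J : ℕ) : ℂ))) := by
      rw [div_sub_div _ _ hbne hzne]
      rw [show (1:ℂ) * (z + ((j + J : ℕ) : ℂ)) - (b + ((j + J : ℕ) : ℂ)) * 1 = z - b by ring,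
        mul_comm (b + _)]
    rw [heq, norm_div, norm_mul]
    have hnum : ‖z - b‖ ≤ C := by
      have := norm_sub_le z b
      linarith
    have hden : ((j + J : ℕ) : ℝ)^2 / 4 ≤ ‖z + ((j + J : ℕ) : ℂ)‖ * ‖b + ((j + J : ℕ) : ℂ)‖ := by
      have := mul_le_mul hz2 hb2 (by positivity) (norm_nonneg _)
      nlinarith
    rw [div_le_div_iff₀ (lt_of_lt_of_le (by positivity) hden) (by positivity)]
    nlinarith [norm_nonneg (z - b), mul_nonneg (norm_nonneg (z + ((j + J : ℕ) : ℂ))) (norm_nonneg (b + ((j + J : ℕ) : ℂ)))]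
  -- summability of the bound
  have hu : Summable (fun j : ℕ => 4 * C / ((j + J : ℕ) : ℝ) ^ 2) := by
    have h1 : Summable (fun j : ℕ => 4 * C / ((j : ℝ)) ^ 2) := by
      have := (Real.summable_one_div_nat_pow.mpr one_lt_two).mul_left (4 * C)
      refine this.congr fun j => ?_
      rw [mul_one_div]
    have := (summable_nat_add_iff J).mpr h1
    refine this.congr fun j => by push_cast; ring_nf
  -- the tail is differentiable on V
  have htaildiff : DifferentiableOn ℂ
      (fun z : ℂ => ∑' j : ℕ, (1 / (b + (j + J : ℕ)) - 1 / (z + (j + J : ℕ)))) V := by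
    refine differentiableOn_tsum_of_summable_norm hu (fun j => ?_) Metric.isOpen_ball
      (fun j w hw => htail j w hw)
    refine DifferentiableOn.sub (differentiableOn_const _) ?_
    refine DifferentiableOn.div (differentiableOn_const _) (by fun_prop) ?_
    intro z hz
    intro h
    exact hVU hz (j + J) (by linear_combination h)
  -- the head is differentiable on V
  have hheaddiff : DifferentiableOn ℂ
      (fun z : ℂ => ∑ j ∈ Finset.range J, (1 / (b + j) - 1 / (z + j))) V := by
    refine DifferentiableOn.fun_sum fun j _ => ?_
    refine DifferentiableOn.sub (differentiableOn_const _) ?_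
    refine DifferentiableOn.div (differentiableOn_const _) (by fun_prop) ?_
    intro z hz h
    exact hVU hz j (by linear_combination h)
  -- splitting
  have hsplit : ∀ z ∈ V,
      (∑' j : ℕ, (1 / (b + j) - 1 / (z + j))) =
      (∑ j ∈ Finset.range J, (1 / (b + j) - 1 / (z + j))) +
      ∑' j : ℕ, (1 / (b + (j + J : ℕ)) - 1 / (z + (j + J : ℕ))) := by
    intro z hz
    have hsumm : Summable (fun j : ℕ => 1 / (b + j) - 1 / ((z:ℂ) + j)) :=
      summable_aux (hVU hz) hb
    exact (Summable.sum_add_tsum_nat_add J hsumm).symm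
  -- conclude
  have hdiff : DifferentiableOn ℂ (fun z : ℂ => ∑' j : ℕ, (1 / (b + j) - 1 / (z + j))) V := by
    refine DifferentiableOn.congr (hheaddiff.add htaildiff) hsplit
  exact hdiff.analyticAt (Metric.isOpen_ball.mem_nhds (Metric.mem_ball_self hr0))

lemma real_case {a b : ℝ} (ha : 0 < a) (hb : 0 < b) :
    (∑' j : ℕ, (1 / ((b : ℂ) + j) - 1 / ((a : ℂ) + j))) =
      _root_.digamma (a : ℂ) - _root_.digamma (b : ℂ) := by
  have hsum := summable_aux (real_ne_neg_nat ha) (real_ne_neg_nat hb)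
  have h1 := hsum.hasSum.tendsto_sum_nat
  have h2 : ∀ N : ℕ, ∑ j ∈ Finset.range N, (1 / ((b : ℂ) + j) - 1 / ((a : ℂ) + j)) =
      _root_.digamma (a : ℂ) - _root_.digamma (b : ℂ) +
        ((rpsi (b + N) - rpsi (a + N) : ℝ) : ℂ) := by
    intro N
    have hda := digamma_add_nat (real_ne_neg_nat ha) N
    have hdb := digamma_add_nat (real_ne_neg_nat hb) N
    have hca : ((a : ℂ) + N) = ((a + N : ℝ) : ℂ) := by push_cast; ring
    have hcb : ((b : ℂ) + N) = ((b + N : ℝ) : ℂ) := by push_cast; ring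
    rw [hca, digamma_ofReal (by positivity)] at hda
    rw [hcb, digamma_ofReal (by positivity)] at hdb
    rw [Finset.sum_sub_distrib]
    rw [digamma_ofReal ha, digamma_ofReal hb] at *
    push_cast
    linear_combination hda - hdb
  have h3 : Tendsto (fun N : ℕ => _root_.digamma (a : ℂ) - _root_.digamma (b : ℂ) +
      ((rpsi (b + N) - rpsi (a + N) : ℝ) : ℂ)) atTop
      (𝓝 (_root_.digamma (a : ℂ) - _root_.digamma (b : ℂ))) := by
    have h4 : Tendsto (fun N : ℕ => ((rpsi (b + N) - rpsi (a + N) : ℝ) : ℂ)) atTop (𝓝 0) := by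
      have := (Complex.continuous_ofReal.tendsto 0).comp (rpsi_diff_tendsto hb ha)
      simpa [Function.comp_def] using this
    simpa using tendsto_const_nhds.add h4
  have h5 : Tendsto (fun N : ℕ => ∑ j ∈ Finset.range N,
      (1 / ((b : ℂ) + j) - 1 / ((a : ℂ) + j))) atTop
      (𝓝 (_root_.digamma (a : ℂ) - _root_.digamma (b : ℂ))) := by
    refine h3.congr fun N => (h2 N).symm
  exact tendsto_nhds_unique h1 h5

lemma seq_tendsto : Tendsto (fun n : ℕ => ((2 + 1 / (n + 1) : ℝ) : ℂ)) atTop (𝓝[≠] (2 : ℂ)) := by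
  refine tendsto_nhdsWithin_of_tendsto_nhds_of_eventually_within _ ?_ ?_
  · have hr : Tendsto (fun n : ℕ => (2 + 1 / (n + 1) : ℝ)) atTop (𝓝 2) := by
      have := tendsto_one_div_add_atTop_nhds_zero_nat (𝕜 := ℝ)
      simpa using tendsto_const_nhds.add this
    have := (Complex.continuous_ofReal.tendsto 2).comp hr
    simpa [Function.comp_def] using this
  · filter_upwards with n
    simp only [Set.mem_compl_iff, Set.mem_singleton_iff]
    intro h
    have h2 : (2 + 1 / ((n : ℝ) + 1) : ℝ) = 2 := by exact_mod_cast h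
    have : (0:ℝ) < 1 / ((n : ℝ) + 1) := by positivity
    linarith

lemma seq_pos (n : ℕ) : (0:ℝ) < 2 + 1 / ((n : ℝ) + 1) := by positivity

lemma two_mem_Upoles : (2 : ℂ) ∈ Upoles := by
  have := real_ne_neg_nat (by norm_num : (0:ℝ) < 2)
  intro m
  have h := this m
  simpa using h

lemma step1 {b : ℝ} (hb : 0 < b) : ∀ a ∈ Upoles,
    (∑' j : ℕ, (1 / ((b : ℂ) + j) - 1 / (a + j))) = _root_.digamma a - _root_.digamma (b : ℂ) := by
  have hfa : AnalyticOnNhd ℂ (fun z : ℂ => ∑' j : ℕ, (1 / ((b : ℂ) + j) - 1 / (z + j))) Upoles :=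
    fun z hz => analyticAt_T (real_ne_neg_nat hb) hz
  have hga : AnalyticOnNhd ℂ (fun z : ℂ => _root_.digamma z - _root_.digamma (b : ℂ)) Upoles :=
    fun z hz => (analyticOnNhd_digamma z hz).sub analyticAt_const
  have hfreq : ∃ᶠ z in 𝓝[≠] (2 : ℂ),
      (∑' j : ℕ, (1 / ((b : ℂ) + j) - 1 / (z + j))) = _root_.digamma z - _root_.digamma (b : ℂ) := by
    refine seq_tendsto.frequently (Frequently.of_forall fun n => ?_)
    exact real_case (seq_pos n) hb
  exact fun a ha =>
    hfa.eqOn_of_preconnected_of_frequently_eq hga isPreconnected_Upoles two_mem_Upoles hfreq ha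

lemma step2 {a : ℂ} (ha : a ∈ Upoles) : ∀ b ∈ Upoles,
    (∑' j : ℕ, (1 / (b + j) - 1 / (a + j))) = _root_.digamma a - _root_.digamma b := by
  have hflip : ∀ w : ℂ, (∑' j : ℕ, (1 / (w + j) - 1 / (a + j))) =
      -(∑' j : ℕ, (1 / (a + j) - 1 / (w + j))) := by
    intro w
    rw [← tsum_neg]
    congr 1
    funext j
    ring
  have hfa : AnalyticOnNhd ℂ (fun w : ℂ => ∑' j : ℕ, (1 / (w + j) - 1 / (a + j))) Upoles := by
    intro w hw
    have := (analyticAt_T (b := a) ha hw).neg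
    refine this.congr ?_
    filter_upwards with z
    exact (hflip z).symm
  have hga : AnalyticOnNhd ℂ (fun w : ℂ => _root_.digamma a - _root_.digamma w) Upoles :=
    fun z hz => analyticAt_const.sub (analyticOnNhd_digamma z hz)
  have hfreq : ∃ᶠ w in 𝓝[≠] (2 : ℂ),
      (∑' j : ℕ, (1 / (w + j) - 1 / (a + j))) = _root_.digamma a - _root_.digamma w := by
    refine seq_tendsto.frequently (Frequently.of_forall fun n => ?_)
    exact step1 (seq_pos n) a ha
  exact fun b hb =>
    hfa.eqOn_of_preconnected_of_frequently_eq hga isPreconnected_Upoles two_mem_Upoles hfreq hb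

/-- Digamma summation identity:
`∑_{m≥1} [1/(ω − d(m+ξ)) + 1/(ω + d(m+ξ))] = (ψ(1+ξ−ω/d) − ψ(1+ξ+ω/d))/d`
provided neither argument of `ψ` is a nonpositive integer. -/
theorem stmt_19
    (d ξ ω : ℂ) (hd : d ≠ 0)
    (ha : ∀ m : ℕ, 1 + ξ - ω / d ≠ -(m : ℂ))
    (hb : ∀ m : ℕ, 1 + ξ + ω / d ≠ -(m : ℂ)) :
    Summable (fun m : ℕ =>
      1 / (ω - d * ((m : ℂ) + 1 + ξ)) + 1 / (ω + d * ((m : ℂ) + 1 + ξ))) ∧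
    (∑' m : ℕ,
        (1 / (ω - d * ((m : ℂ) + 1 + ξ)) + 1 / (ω + d * ((m : ℂ) + 1 + ξ)))) =
      (_root_.digamma (1 + ξ - ω / d) - _root_.digamma (1 + ξ + ω / d)) / d := by
  set a : ℂ := 1 + ξ - ω / d with hadef
  set b : ℂ := 1 + ξ + ω / d with hbdef
  have hsum := summable_aux (a := a) (b := b) ha hb
  have hterm : ∀ m : ℕ, 1 / (ω - d * ((m : ℂ) + 1 + ξ)) + 1 / (ω + d * ((m : ℂ) + 1 + ξ)) =
      (1 / (b + m) - 1 / (a + m)) / d := by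
    intro m
    have hAne : a + m ≠ 0 := fun h => ha m (by linear_combination h)
    have hBne : b + m ≠ 0 := fun h => hb m (by linear_combination h)
    have hA : ω - d * ((m : ℂ) + 1 + ξ) = -(d * (a + m)) := by
      rw [hadef]
      field_simp
      ring
    have hB : ω + d * ((m : ℂ) + 1 + ξ) = d * (b + m) := by
      rw [hbdef]
      field_simp
      ring
    rw [hA, hB]
    field_simp
    ring
  have hS : Summable (fun m : ℕ =>
      1 / (ω - d * ((m : ℂ) + 1 + ξ)) + 1 / (ω + d * ((m : ℂ) + 1 + ξ))) := by
    refine (hsum.div_const d).congr fun m => (hterm m).symm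
  refine ⟨hS, ?_⟩
  have htsum : (∑' m : ℕ,
      (1 / (ω - d * ((m : ℂ) + 1 + ξ)) + 1 / (ω + d * ((m : ℂ) + 1 + ξ)))) =
      (∑' m : ℕ, (1 / (b + m) - 1 / (a + m))) / d := by
    rw [← tsum_div_const]
    exact tsum_congr hterm
  rw [htsum, step2 ha b hb]
end
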